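/- arXiv:1909.11350 — 12 statements merged into one kernel-verified Lean document; each statement's English description precedes it below -/
import Mathlib

section
/- For every Došen model M, all formulas A, B of L₁, every state s, and every n ≥ 1: s ⊨ A∖ⁿB if and only if for every path x̄ of length n and every state t, R⃖x̄ s t and x̄ ⊨ A imply t ⊨ B. -/
/-- Formulas of the language L₁. `ldiv A B` is A∖B, `rdiv B A` is B/A,
`ildiv A B` is A∖∖B (iterative left division), `irdiv B A` is B//A. -/
inductive Fm : Type where
  | var : ℕ → Fm
  | top : Fm
  | bot : Fm
  | and : Fm → Fm → Fm
  | or : Fm → Fm → Fm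
  | prod : Fm → Fm → Fm
  | ldiv : Fm → Fm → Fm
  | rdiv : Fm → Fm → Fm
  | ildiv : Fm → Fm → Fm
  | irdiv : Fm → Fm → Fm

/-- A Došen model on the set of states `S`: a ternary relation and a valuation. -/
structure DosenModel (S : Type*) where
  R : S → S → S → Prop
  V : ℕ → Set S

/-- `Rleft R x̄ s t` is the relation R⃖x̄ s t for a path x̄ (nonempty list). -/
def Rleft {S : Type*} (R : S → S → S → Prop) : List S → S → S → Prop
  | [], _, _ => False
  | [x], s, t => R x s t
  | x :: y :: xs, s, t => ∃ z, R x s z ∧ Rleft R (y :: xs) z t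

/-- `Rright R s x̄ t` is the relation R s x̄⃗ t for a path x̄ (nonempty list). -/
def Rright {S : Type*} (R : S → S → S → Prop) : S → List S → S → Prop
  | _, [], _ => False
  | s, [x], t => R s x t
  | s, x :: y :: xs, t => ∃ z, R s x z ∧ Rright R z (y :: xs) t

/-- Satisfaction: `sat M A s` means s ⊨ A in the model M. -/
def sat {S : Type*} (M : DosenModel S) : Fm → S → Prop
  | .var p, s => s ∈ M.V p
  | .top, _ => True
  | .bot, _ => False
  | .and A B, s => sat M A s ∧ sat M B s
  | .or A B, s => sat M A s ∨ sat M B s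
  | .prod A B, s => ∃ t u, M.R t u s ∧ sat M A t ∧ sat M B u
  | .ldiv A B, s => ∀ t u, M.R t s u → sat M A t → sat M B u
  | .rdiv B A, s => ∀ t u, M.R s t u → sat M A t → sat M B u
  | .ildiv A B, s =>
      ∀ (xs : List S) (t : S), xs ≠ [] → Rleft M.R xs s t → (∀ x ∈ xs, sat M A x) → sat M B t
  | .irdiv B A, s =>
      ∀ (xs : List S) (t : S), xs ≠ [] → Rright M.R s xs t → (∀ x ∈ xs, sat M A x) → sat M B t

/-- Validity of the sequent A ⊢ B in a model. -/
def valid {S : Type*} (M : DosenModel S) (A B : Fm) : Prop :=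
  ∀ s, sat M A s → sat M B s

/-- `ldivN A B n` is A∖ⁿB (meaningful for n ≥ 1): A∖¹B = A∖B, A∖ⁿ⁺¹B = A∖(A∖ⁿB). -/
def ldivN (A B : Fm) : ℕ → Fm
  | 0 => B
  | n + 1 => .ldiv A (ldivN A B n)

/-- `rdivN B A n` is B/ⁿA (meaningful for n ≥ 1): B/¹A = B/A, B/ⁿ⁺¹A = (B/ⁿA)/A. -/
def rdivN (B A : Fm) : ℕ → Fm
  | 0 => B
  | n + 1 => .rdiv (rdivN B A n) A

/-- `RIter R n` is the relation Rⁿ⁺¹ of the paper: R¹ = R,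
R^{n+1} s t u iff ∃ x y, R s y u ∧ Rⁿ x t y. -/
def RIter {S : Type*} (R : S → S → S → Prop) : ℕ → S → S → S → Prop
  | 0, s, t, u => R s t u
  | n + 1, s, t, u => ∃ x y, R s y u ∧ RIter R n x t y

/-- The left transitive closure R⁺ˡ = ⋃_{n ≥ 1} Rⁿ. -/
def RplusL {S : Type*} (R : S → S → S → Prop) (s t u : S) : Prop :=
  ∃ n, RIter R n s t u

/-- Provability in the axiom system IDFNL. `Prov A B` means A ⟶ B. -/
inductive Prov : Fm → Fm → Prop
  | id (A : Fm) : Prov A A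
  | top (A : Fm) : Prov A .top
  | bot (A : Fm) : Prov .bot A
  | andE1 (A B : Fm) : Prov (A.and B) A
  | andE2 (A B : Fm) : Prov (A.and B) B
  | orI1 (A B : Fm) : Prov A (A.or B)
  | orI2 (A B : Fm) : Prov B (A.or B)
  | distrib (A B C : Fm) : Prov (A.and (B.or C)) ((A.and B).or (A.and C))
  | ildivAnd (A B C : Fm) : Prov ((A.ildiv B).and (A.ildiv C)) (A.ildiv (B.and C))
  | ildivUnfold (A B : Fm) : Prov (A.ildiv B) ((A.ldiv B).and (A.ldiv (A.ildiv B)))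
  | ildivFold (A B : Fm) : Prov ((A.ldiv B).and (A.ldiv (A.ildiv B))) (A.ildiv B)
  | irdivAnd (A B C : Fm) : Prov ((B.irdiv A).and (C.irdiv A)) ((B.and C).irdiv A)
  | irdivUnfold (A B : Fm) : Prov (B.irdiv A) ((B.rdiv A).and ((B.irdiv A).rdiv A))
  | irdivFold (A B : Fm) : Prov (((B.irdiv A).rdiv A).and (B.rdiv A)) (B.irdiv A)
  | resL1 {A B C : Fm} : Prov (A.prod B) C → Prov B (A.ldiv C)
  | resL2 {A B C : Fm} : Prov B (A.ldiv C) → Prov (A.prod B) C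
  | resR1 {A B C : Fm} : Prov (A.prod B) C → Prov A (C.rdiv B)
  | resR2 {A B C : Fm} : Prov A (C.rdiv B) → Prov (A.prod B) C
  | andI {A B C : Fm} : Prov A B → Prov A C → Prov A (B.and C)
  | orE {A B C : Fm} : Prov A C → Prov B C → Prov (A.or B) C
  | cut {A B C : Fm} : Prov A B → Prov B C → Prov A C
  | ildivMono {A B C D : Fm} : Prov A B → Prov C D → Prov (B.ildiv C) (A.ildiv D)
  | irdivMono {A B C D : Fm} : Prov A B → Prov C D → Prov (C.irdiv B) (D.irdiv A)
  | ildivInd {A B : Fm} : Prov A (B.ldiv A) → Prov A (B.ildiv A)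
  | irdivInd {A B : Fm} : Prov A (A.rdiv B) → Prov A (A.irdiv B)

/-- Conjunction of a finite list of formulas (⋀∅ = ⊤). -/
def bigAnd : List Fm → Fm
  | [] => .top
  | A :: As => A.and (bigAnd As)

/-- Disjunction of a finite list of formulas (⋁∅ = ⊥). -/
def bigOr : List Fm → Fm
  | [] => .bot
  | A :: As => A.or (bigOr As)

/-- An independent IDFNL-pair: no finite Γ′ ⊆ Γ, Δ′ ⊆ Δ with ⋀Γ′ ⟶ ⋁Δ′. -/
def IndepPair (Γ Δ : Set Fm) : Prop :=
  ¬ ∃ (γ δ : List Fm), (∀ A ∈ γ, A ∈ Γ) ∧ (∀ A ∈ δ, A ∈ Δ) ∧ Prov (bigAnd γ) (bigOr δ)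

/-- A prime IDFNL-theory. -/
def PrimeTheory (T : Set Fm) : Prop :=
  (∀ A B, A ∈ T → B ∈ T → A.and B ∈ T) ∧
  (∀ A B, A ∈ T → Prov A B → B ∈ T) ∧
  (∀ A B, A.or B ∈ T → A ∈ T ∨ B ∈ T)

/-- Membership in the closure of a set of formulas Φ′: the smallest set
containing Φ′, ⊤, ⊥, closed under subformulas, and such that
A∖∖B ∈ Φ implies A∖B ∈ Φ and B//A ∈ Φ implies B/A ∈ Φ. -/
inductive Closure (Φ : Set Fm) : Fm → Prop
  | base {A : Fm} : A ∈ Φ → Closure Φ A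
  | top : Closure Φ .top
  | bot : Closure Φ .bot
  | andL {A B : Fm} : Closure Φ (A.and B) → Closure Φ A
  | andR {A B : Fm} : Closure Φ (A.and B) → Closure Φ B
  | orL {A B : Fm} : Closure Φ (A.or B) → Closure Φ A
  | orR {A B : Fm} : Closure Φ (A.or B) → Closure Φ B
  | prodL {A B : Fm} : Closure Φ (A.prod B) → Closure Φ A
  | prodR {A B : Fm} : Closure Φ (A.prod B) → Closure Φ B
  | ldivL {A B : Fm} : Closure Φ (A.ldiv B) → Closure Φ A
  | ldivR {A B : Fm} : Closure Φ (A.ldiv B) → Closure Φ B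
  | rdivL {A B : Fm} : Closure Φ (A.rdiv B) → Closure Φ A
  | rdivR {A B : Fm} : Closure Φ (A.rdiv B) → Closure Φ B
  | ildivL {A B : Fm} : Closure Φ (A.ildiv B) → Closure Φ A
  | ildivR {A B : Fm} : Closure Φ (A.ildiv B) → Closure Φ B
  | irdivL {A B : Fm} : Closure Φ (A.irdiv B) → Closure Φ A
  | irdivR {A B : Fm} : Closure Φ (A.irdiv B) → Closure Φ B
  | ildivDiv {A B : Fm} : Closure Φ (A.ildiv B) → Closure Φ (A.ldiv B)
  | irdivDiv {A B : Fm} : Closure Φ (B.irdiv A) → Closure Φ (B.rdiv A)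

/-- A set of formulas is closed iff it equals its own closure. -/
def ClosedSet (Φ : Set Fm) : Prop := {A | Closure Φ A} = Φ

/-- `entails Γ A`: ⋀Γ′ ⟶ A for some finite Γ′ ⊆ Γ. -/
def entails (Γ : Set Fm) (A : Fm) : Prop :=
  ∃ γ : List Fm, (∀ X ∈ γ, X ∈ Γ) ∧ Prov (bigAnd γ) A

/-- States of the canonical model over a (finite closed) set Φ:
independent IDFNL-pairs (a_in, a_out) with a_in ∪ a_out = Φ. -/
def CanState (Φ : Set Fm) : Type :=
  {a : Set Fm × Set Fm // IndepPair a.1 a.2 ∧ a.1 ∪ a.2 = Φ}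

/-- The canonical accessibility relation. -/
def canR (Φ : Set Fm) (a b c : CanState Φ) : Prop :=
  ∀ A B : Fm, A ∈ Φ → B ∈ Φ → entails a.1.1 A → entails b.1.1 (A.ldiv B) → entails c.1.1 B

/-- The canonical model M_Φ. -/
def canModel (Φ : Set Fm) : DosenModel (CanState Φ) :=
  ⟨canR Φ, fun p => {a | Fm.var p ∈ Φ ∧ Fm.var p ∈ a.1.1}⟩

/-- s ⊨ A∖ⁿB iff for all paths x̄ of length n and all t,
R⃖x̄ s t and x̄ ⊨ A imply t ⊨ B. -/
theorem ldivN_sat_iff {S : Type} [Nonempty S] (M : DosenModel S) (A B : Fm) (s : S)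
    (n : ℕ) (hn : 1 ≤ n) :
    sat M (ldivN A B n) s ↔
      ∀ (xs : List S) (t : S), xs.length = n → Rleft M.R xs s t →
        (∀ x ∈ xs, sat M A x) → sat M B t := by
  obtain ⟨m, rfl⟩ : ∃ m, n = m + 1 := ⟨n - 1, by omega⟩
  clear hn
  induction m generalizing s with
  | zero =>
    simp only [ldivN]
    constructor
    · intro h xs t hlen hR hA
      match xs with
      | [x] =>
        simp only [Rleft] at hR
        exact h x t hR (hA x (by simp))
    · intro h t u hR hA
      exact h [t] u rfl hR (by simpa using hA)
  | succ m ih =>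
    constructor
    · intro h xs t hlen hR hA
      match xs with
      | x :: y :: ys =>
        obtain ⟨z, hz1, hz2⟩ := hR
        have hm : sat M (ldivN A B (m + 1)) z := h x z hz1 (hA x (by simp))
        have hlen' : (y :: ys).length = m + 1 := by simpa using hlen
        exact (ih z).mp hm (y :: ys) t hlen' hz2
          (fun w hw => hA w (List.mem_cons_of_mem x hw))
    · intro h t u hR hA
      rw [ih u]
      intro xs t' hlen hR' hA'
      match xs with
      | y :: ys =>
        refine h (t :: y :: ys) t' (by simpa using hlen) ⟨u, hR, hR'⟩ ?_
        intro w hw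
        rcases List.mem_cons.mp hw with rfl | hw
        · exact hA
        · exact hA' w hw
end

section
/- For every Došen model M, all formulas A, B of L₁, every state s, and every n ≥ 1: s ⊨ B/ⁿA if and only if for every path x̄ of length n and every state t, R s x̄⃗ t and x̄ ⊨ A imply t ⊨ B. -/
theorem rdivN_sat_aux {S : Type} (M : DosenModel S) (A B : Fm) :
    ∀ (n : ℕ) (s : S), sat M (rdivN B A (n + 1)) s ↔
      ∀ (xs : List S) (t : S), xs.length = n + 1 → Rright M.R s xs t →
        (∀ x ∈ xs, sat M A x) → sat M B t := by
  intro n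
  induction n with
  | zero =>
    intro s
    constructor
    · intro h xs t hlen hR hA
      rcases xs with _ | ⟨x, _ | ⟨y, rest⟩⟩ <;> simp at hlen
      exact h x t hR (hA x (by simp))
    · intro h t u hR hA
      exact h [t] u rfl hR (by simpa using hA)
  | succ n ih =>
    intro s
    constructor
    · intro h xs t hlen hR hA
      rcases xs with _ | ⟨x, _ | ⟨y, rest⟩⟩ <;> simp at hlen
      obtain ⟨z, hz1, hz2⟩ := hR
      have hz := h x z hz1 (hA x (by simp))
      exact (ih z).mp hz (y :: rest) t (by simpa using hlen) hz2
        (fun w hw => hA w (by simp at hw ⊢; tauto))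
    · intro h t u hR hA
      refine (ih u).mpr ?_
      intro xs t' hlen hR' hA'
      rcases xs with _ | ⟨y, rest⟩
      · simp at hlen
      · refine h (t :: y :: rest) t' (by simpa using hlen) ⟨u, hR, hR'⟩ ?_
        intro w hw
        rcases List.mem_cons.mp hw with rfl | hw
        · exact hA
        · exact hA' w hw

/-- s ⊨ B/ⁿA iff for all paths x̄ of length n and all t,
R s x̄⃗ t and x̄ ⊨ A imply t ⊨ B. -/
theorem rdivN_sat_iff {S : Type} [Nonempty S] (M : DosenModel S) (A B : Fm) (s : S)
    (n : ℕ) (hn : 1 ≤ n) :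
    sat M (rdivN B A n) s ↔
      ∀ (xs : List S) (t : S), xs.length = n → Rright M.R s xs t →
        (∀ x ∈ xs, sat M A x) → sat M B t := by
  obtain ⟨m, rfl⟩ := Nat.exists_eq_add_of_le' hn
  simpa using rdivN_sat_aux M A B m s
end

section
/- For all formulas A, B of L₁, the sequents A∖∖B ⊢ A∖B ∧ A∖(A∖∖B) and B//A ⊢ B/A ∧ (B//A)/A are valid in every Došen frame. -/
/-- A∖∖B ⊢ A∖B ∧ A∖(A∖∖B) and B//A ⊢ B/A ∧ (B//A)/A are valid in every Došen frame. -/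
theorem ildiv_unfold_valid (A B : Fm) (S : Type) [Nonempty S] (M : DosenModel S) :
    valid M (A.ildiv B) ((A.ldiv B).and (A.ldiv (A.ildiv B))) ∧
    valid M (B.irdiv A) ((B.rdiv A).and ((B.irdiv A).rdiv A)) := by
  constructor
  · intro s hs
    refine ⟨?_, ?_⟩
    · intro t u htu ht
      exact hs [t] u (by simp) htu (by simpa using ht)
    · intro t u htu ht
      intro xs v hxs hR hA
      have : Rleft M.R (t :: xs) s v := by
        cases xs with
        | nil => exact absurd rfl hxs
        | cons y ys => exact ⟨u, htu, hR⟩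
      refine hs (t :: xs) v (by simp) this ?_
      intro x hx
      rcases List.mem_cons.mp hx with h | h
      · exact h ▸ ht
      · exact hA x h
  · intro s hs
    refine ⟨?_, ?_⟩
    · intro t u htu ht
      exact hs [t] u (by simp) htu (by simpa using ht)
    · intro t u htu ht
      intro xs v hxs hR hA
      have : Rright M.R s (t :: xs) v := by
        cases xs with
        | nil => exact absurd rfl hxs
        | cons y ys => exact ⟨u, htu, hR⟩
      refine hs (t :: xs) v (by simp) this ?_
      intro x hx
      rcases List.mem_cons.mp hx with h | h
      · exact h ▸ ht
      · exact hA x h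
end

section
/- For all formulas A, B of L₁, the sequents A∖B ∧ A∖(A∖∖B) ⊢ A∖∖B and (B//A)/A ∧ B/A ⊢ B//A are valid in every Došen frame. -/
/-- A∖B ∧ A∖(A∖∖B) ⊢ A∖∖B and (B//A)/A ∧ B/A ⊢ B//A are valid in every Došen frame. -/
theorem ildiv_fold_valid (A B : Fm) (S : Type) [Nonempty S] (M : DosenModel S) :
    valid M ((A.ldiv B).and (A.ldiv (A.ildiv B))) (A.ildiv B) ∧
    valid M (((B.irdiv A).rdiv A).and (B.rdiv A)) (B.irdiv A) := by
  constructor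
  · rintro s ⟨h1, h2⟩ xs t hne hR hA
    match xs, hR with
    | [x], hR =>
        exact h1 x t hR (hA x (by simp))
    | x :: y :: xs, ⟨z, hxz, hrest⟩ =>
        exact h2 x z hxz (hA x (by simp)) (y :: xs) t (by simp) hrest
          (fun w hw => hA w (List.mem_cons_of_mem x hw))
  · rintro s ⟨h1, h2⟩ xs t hne hR hA
    match xs, hR with
    | [x], hR =>
        exact h2 x t hR (hA x (by simp))
    | x :: y :: xs, ⟨z, hxz, hrest⟩ =>
        exact h1 x z hxz (hA x (by simp)) (y :: xs) t (by simp) hrest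
          (fun w hw => hA w (List.mem_cons_of_mem x hw))
end

section
/- For every Došen model M and all formulas A, B of L₁: if the sequent A ⊢ B∖A is valid in M then the sequent A ⊢ B∖∖A is valid in M; and if the sequent A ⊢ A/B is valid in M then the sequent A ⊢ A//B is valid in M. -/
/-- If A ⊢ B∖A is valid in M then A ⊢ B∖∖A is valid in M; and if A ⊢ A/B is valid
in M then A ⊢ A//B is valid in M. -/
theorem ildiv_induction_valid {S : Type} [Nonempty S] (M : DosenModel S) (A B : Fm) :
    (valid M A (B.ldiv A) → valid M A (B.ildiv A)) ∧
    (valid M A (A.rdiv B) → valid M A (A.irdiv B)) := by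
  constructor
  · intro h s hs
    intro xs t _ hR hB
    induction xs generalizing s t with
    | nil => exact absurd hR (by simp [Rleft])
    | cons x ys ih =>
      cases ys with
      | nil =>
        exact h s hs x t hR (hB x (by simp))
      | cons y zs =>
        obtain ⟨z, hz, hzt⟩ := hR
        have hzA : sat M A z := h s hs x z hz (hB x (by simp))
        exact ih z hzA t (by simp) hzt (fun w hw => hB w (List.mem_cons_of_mem _ hw))
  · intro h s hs
    intro xs t _ hR hB
    induction xs generalizing s t with
    | nil => exact absurd hR (by simp [Rright])
    | cons x ys ih =>
      cases ys with
      | nil =>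
        exact h s hs x t hR (hB x (by simp))
      | cons y zs =>
        obtain ⟨z, hz, hzt⟩ := hR
        have hzA : sat M A z := h s hs x z hz (hB x (by simp))
        exact ih z hzA t (by simp) hzt (fun w hw => hB w (List.mem_cons_of_mem _ hw))
end

section
/- For every Došen model M, all formulas A, B of L₁, and every state s: (i) if R⃖x̄ s u holds for a path x̄ with last element xₙ, then R⁺ˡ xₙ s u; (ii) consequently, if for all states t, u, R⁺ˡ t s u and t ⊨ A imply u ⊨ B, then s ⊨ A∖∖B. -/
lemma RIter_prepend {S : Type} {R : S → S → S → Prop} :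
    ∀ (n : ℕ) {y s z x u : S}, R y s z → RIter R n x z u → RIter R (n + 1) x s u := by
  intro n
  induction n with
  | zero => intro y s z x u h1 h2; exact ⟨y, z, h2, h1⟩
  | succ n ih =>
    intro y s z x u h1 h2
    obtain ⟨a, b, hxu, hb⟩ := h2
    exact ⟨a, b, hxu, ih h1 hb⟩

/-- (i) If R⃖x̄ s u holds for a path x̄ with last element x, then R⁺ˡ x s u;
(ii) consequently, if for all t, u, R⁺ˡ t s u and t ⊨ A imply u ⊨ B, then s ⊨ A∖∖B. -/
theorem ildiv_transClosure {S : Type} [Nonempty S] (M : DosenModel S) (A B : Fm) (s : S) :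
    (∀ (ys : List S) (x u : S), Rleft M.R (ys ++ [x]) s u → RplusL M.R x s u) ∧
    ((∀ t u : S, RplusL M.R t s u → sat M A t → sat M B u) → sat M (A.ildiv B) s) := by
  have part1 : ∀ (ys : List S) (x u : S), Rleft M.R (ys ++ [x]) s u → RplusL M.R x s u := by
    intro ys
    induction ys generalizing s with
    | nil => intro x u h; exact ⟨0, h⟩
    | cons y ys ih =>
      intro x u h
      obtain ⟨z, hz, hrest⟩ : ∃ z, M.R y s z ∧ Rleft M.R (ys ++ [x]) z u := by
        cases ys <;> simpa [Rleft] using h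
      obtain ⟨n, hn⟩ := ih (s := z) x u hrest
      exact ⟨n + 1, RIter_prepend n hz hn⟩
  refine ⟨part1, ?_⟩
  intro h xs t hne hR hA
  rcases List.eq_nil_or_concat xs with rfl | ⟨ys, x, rfl⟩
  · exact absurd rfl hne
  · exact h x t (part1 ys x t (by simpa using hR)) (hA x (by simp))
end

section
/- There exist a Došen model M, a state s of M, and propositional variables p, q such that s ⊨ p∖∖q, yet there exist states t, u with R⁺ˡ t s u, t ⊨ p and u ⊭ q. (In particular, the implication from s ⊨ A∖∖B to the condition 'for all t,u, R⁺ˡ t s u and t ⊨ A imply u ⊨ B' fails in general.) -/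
/-- There are a Došen model, a state s and variables p, q with s ⊨ p∖∖q, yet
R⁺ˡ t s u, t ⊨ p and u ⊭ q for some t, u. -/
theorem ildiv_transClosure_fails :
    ∃ (S : Type) (M : DosenModel S) (s : S) (p q : ℕ),
      sat M ((Fm.var p).ildiv (Fm.var q)) s ∧
      ∃ t u : S, RplusL M.R t s u ∧ sat M (Fm.var p) t ∧ ¬ sat M (Fm.var q) u := by
  refine ⟨Fin 5,
    ⟨fun a b c => (a = 3 ∧ b = 0 ∧ c = 4) ∨ (a = 1 ∧ b = 4 ∧ c = 2),
     fun n => {w | n = 0 ∧ w = 1}⟩, 0, 0, 1, ?_, 1, 2, ⟨1, 3, 4, ?_, ?_⟩, ?_, ?_⟩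
  · intro xs t' hne hR hall
    exfalso
    match xs with
    | [] => exact hne rfl
    | [x1] =>
      have hp : x1 = 1 := (hall x1 (by simp)).2
      subst hp
      rcases hR with ⟨h, _, _⟩ | ⟨_, h, _⟩
      · exact absurd h (by decide)
      · exact absurd h (by decide)
    | x1 :: x2 :: rest =>
      have hp : x1 = 1 := (hall x1 (by simp)).2
      subst hp
      obtain ⟨z, hz, -⟩ := hR
      rcases hz with ⟨h, _, _⟩ | ⟨_, h, _⟩
      · exact absurd h (by decide)
      · exact absurd h (by decide)
  · exact Or.inr ⟨rfl, rfl, rfl⟩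
  · exact Or.inl ⟨rfl, rfl, rfl⟩
  · exact ⟨rfl, rfl⟩
  · rintro ⟨-, h⟩
    exact absurd h (by decide)
end

section
/- There exist a Došen model M and formulas A, B, C of L₁ such that the sequent A∖∖C ∧ B∖∖C ⊢ (A∨B)∖∖C is not valid in M; likewise, there exist a Došen model M′ and formulas A′, B′, C′ such that the sequent C′//A′ ∧ C′//B′ ⊢ C′//(A′∨B′) is not valid in M′. -/
def myR : Fin 5 → Fin 5 → Fin 5 → Prop :=
  fun a s t => (a = 1 ∧ s = 0 ∧ t = 3) ∨ (a = 2 ∧ s = 3 ∧ t = 4)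

def myV : ℕ → Set (Fin 5)
  | 0 => {1}
  | 1 => {2}
  | _ => {x | x ≠ 4}

def myM : DosenModel (Fin 5) := ⟨myR, myV⟩

lemma L1 : ∀ (xs : List (Fin 5)), xs ≠ [] → (∀ x ∈ xs, x = 1) →
    ∀ s t, Rleft myR xs s t → s = 0 ∧ t = 3 := by
  intro xs
  induction xs with
  | nil => intro h; exact absurd rfl h
  | cons x rest ih =>
    intro _ hall s t hR
    cases rest with
    | nil =>
      have hx : x = 1 := hall x (by simp)
      subst hx
      rcases hR with ⟨h1, h2, h3⟩ | ⟨h1, _, _⟩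
      · exact ⟨h2, h3⟩
      · exact absurd h1 (by decide)
    | cons y rest2 =>
      have hx : x = 1 := hall x (by simp)
      subst hx
      obtain ⟨z, hz, hr⟩ := hR
      have := ih (by simp) (fun w hw => hall w (by simp [hw])) z t hr
      rcases hz with ⟨_, _, h3⟩ | ⟨h1, _, _⟩
      · subst h3; exact absurd this.1 (by decide)
      · exact absurd h1 (by decide)

lemma L2 : ∀ (xs : List (Fin 5)), xs ≠ [] → (∀ x ∈ xs, x = 2) →
    ∀ s t, Rleft myR xs s t → s = 3 ∧ t = 4 := by
  intro xs
  induction xs with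
  | nil => intro h; exact absurd rfl h
  | cons x rest ih =>
    intro _ hall s t hR
    cases rest with
    | nil =>
      have hx : x = 2 := hall x (by simp)
      subst hx
      rcases hR with ⟨h1, _, _⟩ | ⟨_, h2, h3⟩
      · exact absurd h1 (by decide)
      · exact ⟨h2, h3⟩
    | cons y rest2 =>
      have hx : x = 2 := hall x (by simp)
      subst hx
      obtain ⟨z, hz, hr⟩ := hR
      have := ih (by simp) (fun w hw => hall w (by simp [hw])) z t hr
      rcases hz with ⟨h1, _, _⟩ | ⟨_, _, h3⟩
      · exact absurd h1 (by decide)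
      · subst h3; exact absurd this.1 (by decide)

lemma rright_flip {S : Type*} (R : S → S → S → Prop) :
    ∀ (xs : List S) (s t : S),
      Rright (fun a b c => R b a c) s xs t ↔ Rleft R xs s t := by
  intro xs
  induction xs with
  | nil => intro s t; simp [Rright, Rleft]
  | cons x rest ih =>
    intro s t
    cases rest with
    | nil => simp [Rright, Rleft]
    | cons y rest2 =>
      simp only [Rright, Rleft]
      exact exists_congr fun z => and_congr_right fun _ => ih z t

/-- A∖∖C ∧ B∖∖C ⊢ (A∨B)∖∖C and C//A ∧ C//B ⊢ C//(A∨B) are not valid in general. -/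
theorem ildiv_or_not_valid :
    (∃ (S : Type) (M : DosenModel S), Nonempty S ∧ ∃ A B C : Fm,
      ¬ valid M ((A.ildiv C).and (B.ildiv C)) ((A.or B).ildiv C)) ∧
    (∃ (S' : Type) (M' : DosenModel S'), Nonempty S' ∧ ∃ A' B' C' : Fm,
      ¬ valid M' ((C'.irdiv A').and (C'.irdiv B')) (C'.irdiv (A'.or B'))) := by
  constructor
  · refine ⟨Fin 5, myM, ⟨0⟩, .var 0, .var 1, .var 2, ?_⟩
    intro hv
    have hs : sat myM (((Fm.var 0).ildiv (.var 2)).and ((Fm.var 1).ildiv (.var 2))) 0 := by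
      constructor
      · intro xs t hne hR hall
        have h1 : ∀ x ∈ xs, x = 1 := by
          intro x hx; have := hall x hx
          simp only [sat, myM, myV] at this
          exact this
        have := L1 xs hne h1 0 t hR
        simp only [sat, myM, myV, this.2]
        decide
      · intro xs t hne hR hall
        have h2 : ∀ x ∈ xs, x = 2 := by
          intro x hx; have := hall x hx
          simp only [sat, myM, myV] at this
          exact this
        have := L2 xs hne h2 0 t hR
        exact absurd this.1 (by decide)
    have := hv 0 hs [1, 2] 4 (by simp)
      ⟨3, Or.inl ⟨rfl, rfl, rfl⟩, Or.inr ⟨rfl, rfl, rfl⟩⟩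
      (by intro x hx; fin_cases hx <;> simp [sat, myM, myV] <;> first | exact Or.inl rfl | exact Or.inr rfl)
    simp only [sat, myM, myV] at this
    exact this rfl
  · refine ⟨Fin 5, ⟨fun a b c => myR b a c, myV⟩, ⟨0⟩, .var 0, .var 1, .var 2, ?_⟩
    set M' : DosenModel (Fin 5) := ⟨fun a b c => myR b a c, myV⟩ with hM'
    intro hv
    have hs : sat M' (((Fm.var 2).irdiv (.var 0)).and ((Fm.var 2).irdiv (.var 1))) 0 := by
      constructor
      · intro xs t hne hR hall
        rw [hM'] at hR
        rw [rright_flip] at hR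
        have h1 : ∀ x ∈ xs, x = 1 := by
          intro x hx; have := hall x hx
          simp only [sat, hM', myV] at this
          exact this
        have := L1 xs hne h1 0 t hR
        simp only [sat, hM', myV, this.2]
        decide
      · intro xs t hne hR hall
        rw [hM'] at hR
        rw [rright_flip] at hR
        have h2 : ∀ x ∈ xs, x = 2 := by
          intro x hx; have := hall x hx
          simp only [sat, hM', myV] at this
          exact this
        have := L2 xs hne h2 0 t hR
        exact absurd this.1 (by decide)
    have := hv 0 hs [1, 2] 4 (by simp)
      ⟨3, Or.inl ⟨rfl, rfl, rfl⟩, Or.inr ⟨rfl, rfl, rfl⟩⟩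
      (by intro x hx; fin_cases hx <;> simp [sat, hM', myV] <;> first | exact Or.inl rfl | exact Or.inr rfl)
    simp only [sat, hM', myV] at this
    exact this rfl
end

section
/- (Pair Extension) Let (Γ,Δ) be an independent IDFNL-pair and let Φ be a set of formulas of L₁ with Γ ∪ Δ ⊆ Φ. Then there is an independent IDFNL-pair (Γ′,Δ′) such that Γ ⊆ Γ′, Δ ⊆ Δ′ and Γ′ ∪ Δ′ = Φ. -/
section Aux

lemma provAndMem {γ : List Fm} {X : Fm} (h : X ∈ γ) : Prov (bigAnd γ) X := by
  induction γ with
  | nil => cases h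
  | cons Y γ ih =>
    rcases List.mem_cons.1 h with rfl | h
    · exact Prov.andE1 _ _
    · exact Prov.cut (Prov.andE2 _ _) (ih h)

lemma provAndList {γ γ' : List Fm} (h : ∀ X ∈ γ, X ∈ γ') :
    Prov (bigAnd γ') (bigAnd γ) := by
  induction γ with
  | nil => exact Prov.top _
  | cons Y γ ih =>
    exact Prov.andI (provAndMem (h Y (List.mem_cons_self)))
      (ih fun X hX => h X (List.mem_cons_of_mem _ hX))

lemma provOrMem {δ : List Fm} {X : Fm} (h : X ∈ δ) : Prov X (bigOr δ) := by
  induction δ with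
  | nil => cases h
  | cons Y δ ih =>
    rcases List.mem_cons.1 h with rfl | h
    · exact Prov.orI1 _ _
    · exact Prov.cut (ih h) (Prov.orI2 _ _)

lemma provOrList {δ δ' : List Fm} (h : ∀ X ∈ δ, X ∈ δ') :
    Prov (bigOr δ) (bigOr δ') := by
  induction δ with
  | nil => exact Prov.bot _
  | cons Y δ ih =>
    exact Prov.orE (provOrMem (h Y (List.mem_cons_self)))
      (ih fun X hX => h X (List.mem_cons_of_mem _ hX))

lemma provCutAO {γ δ : List Fm} {A : Fm}
    (h1 : Prov (bigAnd (A :: γ)) (bigOr δ))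
    (h2 : Prov (bigAnd γ) (bigOr (A :: δ))) :
    Prov (bigAnd γ) (bigOr δ) := by
  have hC : Prov (bigAnd γ) ((bigAnd γ).and (Fm.or A (bigOr δ))) := Prov.andI (Prov.id _) h2
  have hd := Prov.distrib (bigAnd γ) A (bigOr δ)
  have h1' : Prov ((bigAnd γ).and A) (bigOr δ) :=
    Prov.cut (Prov.andI (Prov.andE2 _ _) (Prov.andE1 _ _)) h1
  exact Prov.cut hC (Prov.cut hd (Prov.orE h1' (Prov.andE2 _ _)))

lemma chain_list {α : Type*} {c : Set (Set α)} (hc : IsChain (· ⊆ ·) c)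
    (hne : c.Nonempty) :
    ∀ l : List α, (∀ x ∈ l, ∃ s ∈ c, x ∈ s) → ∃ s ∈ c, ∀ x ∈ l, x ∈ s := by
  intro l
  induction l with
  | nil => exact fun _ => ⟨hne.choose, hne.choose_spec, by simp⟩
  | cons x l ih =>
    intro hl
    obtain ⟨s, hs, hsl⟩ := ih fun y hy => hl y (List.mem_cons_of_mem _ hy)
    obtain ⟨t, ht, hxt⟩ := hl x (List.mem_cons_self)
    rcases eq_or_ne s t with rfl | hst
    · exact ⟨s, hs, fun y hy => by
        rcases List.mem_cons.1 hy with rfl | hy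
        · exact hxt
        · exact hsl y hy⟩
    rcases hc hs ht hst with hsub | hsub
    · exact ⟨t, ht, fun y hy => by
        rcases List.mem_cons.1 hy with rfl | hy
        · exact hxt
        · exact hsub (hsl y hy)⟩
    · exact ⟨s, hs, fun y hy => by
        rcases List.mem_cons.1 hy with rfl | hy
        · exact hsub hxt
        · exact hsl y hy⟩

end Aux

/-- Pair Extension: any independent IDFNL-pair (Γ,Δ) with Γ ∪ Δ ⊆ Φ extends to an
independent pair (Γ′,Δ′) with Γ ⊆ Γ′, Δ ⊆ Δ′ and Γ′ ∪ Δ′ = Φ. -/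
theorem pair_extension (Γ Δ Φ : Set Fm) (h : IndepPair Γ Δ) (hsub : Γ ∪ Δ ⊆ Φ) :
    ∃ Γ' Δ' : Set Fm, IndepPair Γ' Δ' ∧ Γ ⊆ Γ' ∧ Δ ⊆ Δ' ∧ Γ' ∪ Δ' = Φ := by
  classical
  -- encode pairs of sets as sets of Fm ⊕ Fm
  let L : Set (Fm ⊕ Fm) → Set Fm := fun s => {A | Sum.inl A ∈ s}
  let R : Set (Fm ⊕ Fm) → Set Fm := fun s => {A | Sum.inr A ∈ s}
  let S : Set (Set (Fm ⊕ Fm)) :=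
    {s | IndepPair (L s) (R s) ∧ Γ ⊆ L s ∧ Δ ⊆ R s ∧ L s ⊆ Φ ∧ R s ⊆ Φ}
  have hchain : ∀ c ⊆ S, IsChain (· ⊆ ·) c → c.Nonempty →
      ∃ ub ∈ S, ∀ s ∈ c, s ⊆ ub := by
    intro c hcS hc hne
    refine ⟨⋃₀ c, ⟨?_, ?_, ?_, ?_, ?_⟩, fun s hs => Set.subset_sUnion_of_mem hs⟩
    · rintro ⟨γ, δ, hγ, hδ, hp⟩
      have hall : ∀ x ∈ γ.map Sum.inl ++ δ.map Sum.inr, ∃ s ∈ c, x ∈ s := by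
        intro x hx
        rcases List.mem_append.1 hx with hx | hx
        · obtain ⟨A, hA, rfl⟩ := List.mem_map.1 hx
          obtain ⟨s, hs, hAs⟩ := hγ A hA
          exact ⟨s, hs, hAs⟩
        · obtain ⟨A, hA, rfl⟩ := List.mem_map.1 hx
          obtain ⟨s, hs, hAs⟩ := hδ A hA
          exact ⟨s, hs, hAs⟩
      obtain ⟨s, hs, hmem⟩ := chain_list hc hne (γ.map Sum.inl ++ δ.map Sum.inr) hall
      exact (hcS hs).1 ⟨γ, δ,
        fun A hA => hmem (Sum.inl A) (by simp [hA]),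
        fun A hA => hmem (Sum.inr A) (by simp [hA]), hp⟩
    · intro A hA
      obtain ⟨s, hs⟩ := hne
      exact ⟨s, hs, (hcS hs).2.1 hA⟩
    · intro A hA
      obtain ⟨s, hs⟩ := hne
      exact ⟨s, hs, (hcS hs).2.2.1 hA⟩
    · rintro A ⟨s, hs, hAs⟩
      exact (hcS hs).2.2.2.1 hAs
    · rintro A ⟨s, hs, hAs⟩
      exact (hcS hs).2.2.2.2 hAs
  have hx0 : (Sum.inl '' Γ ∪ Sum.inr '' Δ : Set (Fm ⊕ Fm)) ∈ S := by
    have hL : L (Sum.inl '' Γ ∪ Sum.inr '' Δ) = Γ := by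
      ext A; simp [L]
    have hR : R (Sum.inl '' Γ ∪ Sum.inr '' Δ) = Δ := by
      ext A; simp [R]
    refine ⟨?_, ?_, ?_, ?_, ?_⟩
    · rw [hL, hR]; exact h
    · rw [hL]
    · rw [hR]
    · rw [hL]; exact fun A hA => hsub (Or.inl hA)
    · rw [hR]; exact fun A hA => hsub (Or.inr hA)
  obtain ⟨m, hxm, hmS, hmax⟩ := zorn_subset_nonempty S hchain _ hx0
  obtain ⟨hind, hΓm, hΔm, hLΦ, hRΦ⟩ := hmS
  refine ⟨L m, R m, hind, hΓm, hΔm, ?_⟩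
  apply Set.Subset.antisymm (Set.union_subset hLΦ hRΦ)
  intro A hAΦ
  by_contra hA
  obtain ⟨hA1, hA2⟩ : A ∉ L m ∧ A ∉ R m := by
    constructor <;> intro hmem
    · exact hA (Or.inl hmem)
    · exact hA (Or.inr hmem)
  -- adding inl A must break independence
  have hLins : L (insert (Sum.inl A) m) = insert A (L m) := by
    ext B; simp [L]
  have hRins : R (insert (Sum.inl A) m) = R m := by
    ext B; simp [R]
  have hLins' : L (insert (Sum.inr A) m) = L m := by
    ext B; simp [L]
  have hRins' : R (insert (Sum.inr A) m) = insert A (R m) := by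
    ext B; simp [R]
  have hnot1 : ¬ IndepPair (insert A (L m)) (R m) := by
    intro hi
    have hmem : insert (Sum.inl A) m ∈ S := by
      refine ⟨by rw [hLins, hRins]; exact hi, ?_, ?_, ?_, ?_⟩
      · rw [hLins]; exact hΓm.trans (Set.subset_insert _ _)
      · rw [hRins]; exact hΔm
      · rw [hLins]; exact Set.insert_subset hAΦ hLΦ
      · rw [hRins]; exact hRΦ
    have := hmax hmem (Set.subset_insert _ _)
    exact hA1 (by simpa [L] using this (Set.mem_insert _ _))
  have hnot2 : ¬ IndepPair (L m) (insert A (R m)) := by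
    intro hi
    have hmem : insert (Sum.inr A) m ∈ S := by
      refine ⟨by rw [hLins', hRins']; exact hi, ?_, ?_, ?_, ?_⟩
      · rw [hLins']; exact hΓm
      · rw [hRins']; exact hΔm.trans (Set.subset_insert _ _)
      · rw [hLins']; exact hLΦ
      · rw [hRins']; exact Set.insert_subset hAΦ hRΦ
    have := hmax hmem (Set.subset_insert _ _)
    exact hA2 (by simpa [R] using this (Set.mem_insert _ _))
  rw [IndepPair, not_not] at hnot1 hnot2
  obtain ⟨γ₁, δ₁, hγ₁, hδ₁, hp₁⟩ := hnot1
  obtain ⟨γ₂, δ₂, hγ₂, hδ₂, hp₂⟩ := hnot2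
  -- filter out A from γ₁ and δ₂
  set γ₁' : List Fm := γ₁.filter (fun X => X ≠ A) with hγ₁'def
  set δ₂' : List Fm := δ₂.filter (fun X => X ≠ A) with hδ₂'def
  have hγ₁'L : ∀ X ∈ γ₁', X ∈ L m := by
    intro X hX
    have := List.mem_filter.1 hX
    rcases hγ₁ X this.1 with rfl | hXm
    · exact absurd this.2 (by simp)
    · exact hXm
  have hδ₂'R : ∀ X ∈ δ₂', X ∈ R m := by
    intro X hX
    have := List.mem_filter.1 hX
    rcases hδ₂ X this.1 with rfl | hXm
    · exact absurd this.2 (by simp)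
    · exact hXm
  -- combine
  set γ : List Fm := γ₁' ++ γ₂ with hγdef
  set δ : List Fm := δ₁ ++ δ₂' with hδdef
  have h1 : Prov (bigAnd (A :: γ)) (bigOr δ) := by
    refine Prov.cut (provAndList (γ := γ₁) ?_) (Prov.cut hp₁ (provOrList ?_))
    · intro X hX
      rcases eq_or_ne X A with rfl | hXA
      · exact List.mem_cons_self
      · exact List.mem_cons_of_mem _
          (List.mem_append_left _ (List.mem_filter.2 ⟨hX, by simpa using hXA⟩))
    · intro X hX
      exact List.mem_append_left _ hX
  have h2 : Prov (bigAnd γ) (bigOr (A :: δ)) := by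
    refine Prov.cut (provAndList (γ := γ₂) ?_) (Prov.cut hp₂ (provOrList ?_))
    · intro X hX
      exact List.mem_append_right _ hX
    · intro X hX
      rcases eq_or_ne X A with rfl | hXA
      · exact List.mem_cons_self
      · exact List.mem_cons_of_mem _
          (List.mem_append_right _ (List.mem_filter.2 ⟨hX, by simpa using hXA⟩))
  exact hind ⟨γ, δ,
    fun X hX => (List.mem_append.1 hX).elim (hγ₁'L X) (hγ₂ X),
    fun X hX => (List.mem_append.1 hX).elim (hδ₁ X) (hδ₂'R X),
    provCutAO h1 h2⟩
end

section
/- If (Γ,Δ) is an independent IDFNL-pair, then there is a prime IDFNL-theory Σ such that Γ ⊆ Σ and Δ ∩ Σ = ∅. -/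
lemma bigAnd_mem {l : List Fm} {A : Fm} (h : A ∈ l) : Prov (bigAnd l) A := by
  induction l with
  | nil => cases h
  | cons B l ih =>
    rcases List.mem_cons.mp h with rfl | h
    · exact Prov.andE1 _ _
    · exact Prov.cut (Prov.andE2 _ _) (ih h)

lemma bigAnd_intro {l : List Fm} {C : Fm} (h : ∀ A ∈ l, Prov C A) : Prov C (bigAnd l) := by
  induction l with
  | nil => exact Prov.top C
  | cons B l ih =>
    exact Prov.andI (h B (by simp)) (ih fun A hA => h A (by simp [hA]))

lemma bigAnd_sub {l l' : List Fm} (h : ∀ A ∈ l', A ∈ l) : Prov (bigAnd l) (bigAnd l') :=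
  bigAnd_intro fun A hA => bigAnd_mem (h A hA)

lemma bigOr_mem {l : List Fm} {A : Fm} (h : A ∈ l) : Prov A (bigOr l) := by
  induction l with
  | nil => cases h
  | cons B l ih =>
    rcases List.mem_cons.mp h with rfl | h
    · exact Prov.orI1 _ _
    · exact Prov.cut (ih h) (Prov.orI2 _ _)

lemma bigOr_sub {l l' : List Fm} (h : ∀ A ∈ l', A ∈ l) : Prov (bigOr l') (bigOr l) := by
  induction l' with
  | nil => exact Prov.bot _
  | cons B l' ih =>
    exact Prov.orE (bigOr_mem (h B (by simp))) (ih fun A hA => h A (by simp [hA]))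

open Classical in
lemma dep_cut {T Δ : Set Fm} {A : Fm} (hA : entails T A)
    (hdep : ¬ IndepPair (T ∪ {A}) Δ) : ¬ IndepPair T Δ := by
  obtain ⟨γ, δ, hγ, hδ, hp⟩ := not_not.mp hdep
  obtain ⟨γ₁, hγ₁, hp₁⟩ := hA
  rw [IndepPair, not_not]
  refine ⟨γ₁ ++ γ.filter (fun X => decide (X ∈ T)), δ, ?_, hδ, ?_⟩
  · intro X hX
    rcases List.mem_append.mp hX with hX | hX
    · exact hγ₁ X hX
    · exact of_decide_eq_true (List.mem_filter.mp hX).2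
  · refine Prov.cut (bigAnd_intro ?_) hp
    intro X hX
    rcases hγ X hX with hXT | hXA
    · exact bigAnd_mem (List.mem_append_right _ (List.mem_filter.mpr ⟨hX, decide_eq_true hXT⟩))
    · rcases hXA with rfl
      exact Prov.cut (bigAnd_sub fun Y hY => List.mem_append_left _ hY) hp₁

/-- If (Γ,Δ) is an independent IDFNL-pair, then there is a prime IDFNL-theory Σ
with Γ ⊆ Σ and Δ ∩ Σ = ∅. -/
theorem prime_extension (Γ Δ : Set Fm) (h : IndepPair Γ Δ) :
    ∃ T : Set Fm, PrimeTheory T ∧ Γ ⊆ T ∧ Δ ∩ T = ∅ := by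
  classical
  set S : Set (Set Fm) := {T | Γ ⊆ T ∧ IndepPair T Δ} with hS
  have hub : ∀ c ⊆ S, IsChain (· ⊆ ·) c → c.Nonempty →
      ∃ ub ∈ S, ∀ s ∈ c, s ⊆ ub := by
    rintro c hcS hchain ⟨s₀, hs₀⟩
    refine ⟨⋃₀ c, ⟨(hcS hs₀).1.trans (Set.subset_sUnion_of_mem hs₀), ?_⟩,
      fun s hs => Set.subset_sUnion_of_mem hs⟩
    rintro ⟨γ, δ, hγ, hδ, hp⟩
    have key : ∀ γ : List Fm, (∀ X ∈ γ, X ∈ ⋃₀ c) → ∃ s ∈ c, ∀ X ∈ γ, X ∈ s := by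
      intro γ
      induction γ with
      | nil => exact fun _ => ⟨s₀, hs₀, by simp⟩
      | cons X γ ih =>
        intro hmem
        obtain ⟨s, hsc, hs⟩ := ih (fun Y hY => hmem Y (by simp [hY]))
        obtain ⟨t, htc, hXt⟩ := hmem X (by simp)
        rcases eq_or_ne s t with rfl | hne
        · exact ⟨s, hsc, by
            intro Y hY; rcases List.mem_cons.mp hY with rfl | hY
            exacts [hXt, hs Y hY]⟩
        · rcases hchain hsc htc hne with hst | hts
          · exact ⟨t, htc, by
              intro Y hY; rcases List.mem_cons.mp hY with rfl | hY
              exacts [hXt, hst (hs Y hY)]⟩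
          · exact ⟨s, hsc, by
              intro Y hY; rcases List.mem_cons.mp hY with rfl | hY
              exacts [hts hXt, hs Y hY]⟩
    obtain ⟨s, hsc, hs⟩ := key γ hγ
    exact (hcS hsc).2 ⟨γ, δ, hs, hδ, hp⟩
  obtain ⟨M, hΓM, hmax⟩ := zorn_subset_nonempty S hub Γ ⟨subset_rfl, h⟩
  have hind : IndepPair M Δ := hmax.1.2
  have hmaxAdd : ∀ A, A ∉ M → ¬ IndepPair (M ∪ {A}) Δ := by
    intro A hA hi
    have hMem : (M ∪ {A}) ∈ S := ⟨hmax.1.1.trans Set.subset_union_left, hi⟩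
    exact hA (hmax.2 hMem Set.subset_union_left (Set.mem_union_right _ rfl))
  have hent : ∀ A, entails M A → A ∈ M := by
    intro A hA
    by_contra hAm
    exact dep_cut hA (hmaxAdd A hAm) hind
  refine ⟨M, ⟨?_, ?_, ?_⟩, hmax.1.1, ?_⟩
  · -- closed under conjunction
    intro A B hA hB
    refine hent _ ⟨[A, B], ?_, ?_⟩
    · intro X hX
      rcases List.mem_cons.mp hX with rfl | hX
      · exact hA
      · rcases List.mem_singleton.mp hX with rfl
        exact hB
    · exact Prov.andI (Prov.andE1 _ _) (Prov.cut (Prov.andE2 _ _) (Prov.andE1 _ _))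
  · -- closed under provable sequents
    intro A B hA hAB
    refine hent _ ⟨[A], ?_, Prov.cut (Prov.andE1 _ _) hAB⟩
    intro X hX
    rcases List.mem_singleton.mp hX with rfl
    exact hA
  · -- disjunction property
    intro A B hAB
    by_contra hcon
    push_neg at hcon
    obtain ⟨hA, hB⟩ := hcon
    obtain ⟨γA, δA, hγA, hδA, hpA⟩ := not_not.mp (hmaxAdd A hA)
    obtain ⟨γB, δB, hγB, hδB, hpB⟩ := not_not.mp (hmaxAdd B hB)
    set fA := γA.filter (fun X => decide (X ∈ M)) with hfA
    set fB := γB.filter (fun X => decide (X ∈ M)) with hfB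
    set D := bigAnd (fA ++ fB) with hD
    apply hind
    refine ⟨(A.or B) :: (fA ++ fB), δA ++ δB, ?_, ?_, ?_⟩
    · intro X hX
      rcases List.mem_cons.mp hX with rfl | hX
      · exact hAB
      · rcases List.mem_append.mp hX with hX | hX <;>
          exact of_decide_eq_true (List.mem_filter.mp hX).2
    · intro X hX
      rcases List.mem_append.mp hX with hX | hX
      exacts [hδA X hX, hδB X hX]
    · have brA : Prov (D.and A) (bigOr (δA ++ δB)) := by
        refine Prov.cut (Prov.cut (bigAnd_intro ?_) hpA)
          (bigOr_sub fun X hX => List.mem_append_left _ hX)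
        intro X hX
        rcases Set.mem_union _ _ _ |>.mp (hγA X hX) with hXM | hXA
        · exact Prov.cut (Prov.andE1 _ _) (bigAnd_mem
            (List.mem_append_left _ (List.mem_filter.mpr ⟨hX, decide_eq_true hXM⟩)))
        · rcases Set.mem_singleton_iff.mp hXA with rfl
          exact Prov.andE2 _ _
      have brB : Prov (D.and B) (bigOr (δA ++ δB)) := by
        refine Prov.cut (Prov.cut (bigAnd_intro ?_) hpB)
          (bigOr_sub fun X hX => List.mem_append_right _ hX)
        intro X hX
        rcases Set.mem_union _ _ _ |>.mp (hγB X hX) with hXM | hXB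
        · exact Prov.cut (Prov.andE1 _ _) (bigAnd_mem
            (List.mem_append_right _ (List.mem_filter.mpr ⟨hX, decide_eq_true hXM⟩)))
        · rcases Set.mem_singleton_iff.mp hXB with rfl
          exact Prov.andE2 _ _
      have swap : Prov ((A.or B).and D) (D.and (A.or B)) :=
        Prov.andI (Prov.andE2 _ _) (Prov.andE1 _ _)
      exact Prov.cut swap (Prov.cut (Prov.distrib _ _ _) (Prov.orE brA brB))
  · -- Δ ∩ M = ∅
    rw [Set.eq_empty_iff_forall_notMem]
    rintro X ⟨hXΔ, hXM⟩
    refine hind ⟨[X], [X], ?_, ?_, Prov.cut (Prov.andE1 _ _) (Prov.orI1 _ _)⟩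
    · intro Y hY; rcases List.mem_singleton.mp hY with rfl; exact hXM
    · intro Y hY; rcases List.mem_singleton.mp hY with rfl; exact hXΔ
end

section
/- (Truth Lemma) Let Φ be a finite closed set of formulas of L₁. For every formula E ∈ Φ and every state z of the canonical model M_Φ: E ∈ z_in if and only if z ⊨ E in M_Φ. -/
namespace TL
open Fm Prov

/-! ### Prov toolkit -/

theorem and_mono {A A' B B' : Fm} (h1 : Prov A A') (h2 : Prov B B') :
    Prov (A.and B) (A'.and B') :=
  andI (cut (andE1 _ _) h1) (cut (andE2 _ _) h2)

theorem or_mono {A A' B B' : Fm} (h1 : Prov A A') (h2 : Prov B B') :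
    Prov (A.or B) (A'.or B') :=
  orE (cut h1 (orI1 _ _)) (cut h2 (orI2 _ _))

theorem prod_mono {A A' B B' : Fm} (h1 : Prov A A') (h2 : Prov B B') :
    Prov (A.prod B) (A'.prod B') := by
  apply resR2
  exact cut h1 (resR1 (resL2 (cut h2 (resL1 (Prov.id _)))))

theorem ldiv_mono {A A' B B' : Fm} (h1 : Prov A' A) (h2 : Prov B B') :
    Prov (A.ldiv B) (A'.ldiv B') := by
  apply resL1
  exact cut (prod_mono h1 (Prov.id _)) (cut (resL2 (Prov.id _)) h2)

theorem rdiv_mono {B B' A A' : Fm} (h1 : Prov B B') (h2 : Prov A' A) :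
    Prov (B.rdiv A) (B'.rdiv A') := by
  apply resR1
  exact cut (prod_mono (Prov.id _) h2) (cut (resR2 (Prov.id _)) h1)

theorem ldiv_and2 {A B C : Fm} :
    Prov ((A.ldiv B).and (A.ldiv C)) (A.ldiv (B.and C)) := by
  apply resL1
  exact andI (resL2 (andE1 _ _)) (resL2 (andE2 _ _))

theorem rdiv_and2 {A B C : Fm} :
    Prov ((B.rdiv A).and (C.rdiv A)) ((B.and C).rdiv A) := by
  apply resR1
  exact andI (resR2 (andE1 _ _)) (resR2 (andE2 _ _))

theorem ldiv_or2 {X Y C : Fm} :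
    Prov ((X.ldiv C).and (Y.ldiv C)) ((X.or Y).ldiv C) := by
  apply resL1
  apply resR2
  exact orE (resR1 (resL2 (andE1 _ _))) (resR1 (resL2 (andE2 _ _)))

theorem rdiv_or2 {X Y C : Fm} :
    Prov ((C.rdiv X).and (C.rdiv Y)) (C.rdiv (X.or Y)) := by
  apply resR1
  apply resL2
  exact orE (resL1 (resR2 (andE1 _ _))) (resL1 (resR2 (andE2 _ _)))

theorem bot_ldiv {W C : Fm} : Prov W (Fm.bot.ldiv C) :=
  resL1 (resR2 (bot _))

theorem rdiv_bot {W C : Fm} : Prov W (C.rdiv Fm.bot) :=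
  resR1 (resL2 (bot _))

theorem top_ldiv_top {W A : Fm} : Prov W (A.ldiv Fm.top) :=
  resL1 (top _)


/-! ### bigAnd / bigOr -/

theorem bigAnd_elim {γ : List Fm} {A : Fm} (h : A ∈ γ) : Prov (bigAnd γ) A := by
  induction γ with
  | nil => cases h
  | cons B γ ih =>
    rcases List.mem_cons.1 h with rfl | h
    · exact andE1 _ _
    · exact cut (andE2 _ _) (ih h)

theorem bigAnd_intro {γ : List Fm} {X : Fm} (h : ∀ A ∈ γ, Prov X A) :
    Prov X (bigAnd γ) := by
  induction γ with
  | nil => exact top _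
  | cons B γ ih =>
    exact andI (h B (List.mem_cons_self)) (ih fun A hA => h A (List.mem_cons_of_mem _ hA))

theorem bigAnd_sub {γ l : List Fm} (h : ∀ A ∈ γ, A ∈ l) :
    Prov (bigAnd l) (bigAnd γ) :=
  bigAnd_intro fun A hA => bigAnd_elim (h A hA)

theorem bigOr_intro {l : List Fm} {A : Fm} (h : A ∈ l) : Prov A (bigOr l) := by
  induction l with
  | nil => cases h
  | cons B l ih =>
    rcases List.mem_cons.1 h with rfl | h
    · exact orI1 _ _
    · exact cut (ih h) (orI2 _ _)

theorem bigOr_elim {l : List Fm} {C : Fm} (h : ∀ A ∈ l, Prov A C) :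
    Prov (bigOr l) C := by
  induction l with
  | nil => exact bot _
  | cons B l ih =>
    exact orE (h B (List.mem_cons_self)) (ih fun A hA => h A (List.mem_cons_of_mem _ hA))

theorem bigOr_sub {δ l : List Fm} (h : ∀ A ∈ δ, A ∈ l) :
    Prov (bigOr δ) (bigOr l) :=
  bigOr_elim fun A hA => bigOr_intro (h A hA)

theorem ldiv_bigAnd {A : Fm} {l : List Fm} :
    Prov (bigAnd (l.map (A.ldiv ·))) (A.ldiv (bigAnd l)) := by
  induction l with
  | nil => exact top_ldiv_top
  | cons B l ih =>
    exact cut (and_mono (Prov.id _) ih) ldiv_and2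

theorem bigAnd_rdiv {A : Fm} {l : List Fm} :
    Prov (bigAnd (l.map (·.rdiv A))) ((bigAnd l).rdiv A) := by
  induction l with
  | nil => exact resR1 (top _)
  | cons B l ih =>
    exact cut (and_mono (Prov.id _) ih) rdiv_and2

theorem bigOr_ldiv {C : Fm} {l : List Fm} :
    Prov (bigAnd (l.map (·.ldiv C))) ((bigOr l).ldiv C) := by
  induction l with
  | nil => exact bot_ldiv
  | cons B l ih => exact cut (and_mono (Prov.id _) ih) ldiv_or2

theorem rdiv_bigOr {C : Fm} {l : List Fm} :
    Prov (bigAnd (l.map (C.rdiv ·))) (C.rdiv (bigOr l)) := by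
  induction l with
  | nil => exact rdiv_bot
  | cons B l ih => exact cut (and_mono (Prov.id _) ih) rdiv_or2

theorem and_bigOr_distrib {G : Fm} {l : List Fm} :
    Prov (G.and (bigOr l)) (bigOr (l.map (G.and ·))) := by
  induction l with
  | nil => exact andE2 _ _
  | cons B l ih =>
    exact cut (distrib _ _ _) (or_mono (Prov.id _) ih)

theorem prod_bigOr_left {B : Fm} {l : List Fm} :
    Prov ((bigOr l).prod B) (bigOr (l.map (·.prod B))) := by
  apply resR2
  exact bigOr_elim fun A hA => resR1 (bigOr_intro (List.mem_map_of_mem hA))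

theorem prod_bigOr_right {A : Fm} {l : List Fm} :
    Prov (A.prod (bigOr l)) (bigOr (l.map (A.prod ·))) := by
  apply resL2
  exact bigOr_elim fun B hB => resL1 (bigOr_intro (List.mem_map_of_mem hB))

/-! ### coinduction derived rules -/

theorem ildiv_coind {X A B : Fm} (h1 : Prov X (A.ldiv B)) (h2 : Prov X (A.ldiv X)) :
    Prov X (A.ildiv B) := by
  -- Y := B ∧ X
  have hXY : Prov X (A.ldiv (B.and X)) := cut (andI h1 h2) ldiv_and2
  have hY : Prov (B.and X) (A.ildiv (B.and X)) :=
    ildivInd (cut (andE2 _ _) hXY)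
  have hYB : Prov (B.and X) (A.ildiv B) :=
    cut hY (ildivMono (Prov.id A) (andE1 _ _))
  have hX2 : Prov X (A.ldiv (A.ildiv B)) :=
    cut hXY (ldiv_mono (Prov.id _) hYB)
  exact cut (andI h1 hX2) (ildivFold _ _)

theorem irdiv_coind {X A B : Fm} (h1 : Prov X (B.rdiv A)) (h2 : Prov X (X.rdiv A)) :
    Prov X (B.irdiv A) := by
  have hXY : Prov X ((B.and X).rdiv A) := cut (andI h1 h2) rdiv_and2
  have hY : Prov (B.and X) ((B.and X).irdiv A) :=
    irdivInd (cut (andE2 _ _) hXY)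
  have hYB : Prov (B.and X) (B.irdiv A) :=
    cut hY (irdivMono (Prov.id A) (andE1 _ _))
  have hX2 : Prov X ((B.irdiv A).rdiv A) :=
    cut hXY (rdiv_mono hYB (Prov.id _))
  exact cut (andI hX2 h1) (irdivFold _ _)

end TL

namespace TL
open Fm Prov

attribute [local instance] Classical.propDecidable

/-! ### entails toolkit -/

theorem entails_of_mem {Γ : Set Fm} {A : Fm} (h : A ∈ Γ) : entails Γ A :=
  ⟨[A], by simpa using h, andE1 _ _⟩

theorem entails_cut {Γ : Set Fm} {A B : Fm} (h : entails Γ A) (hp : Prov A B) :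
    entails Γ B :=
  let ⟨γ, hγ, hpr⟩ := h
  ⟨γ, hγ, cut hpr hp⟩

theorem entails_bigAnd {Γ : Set Fm} {l : List Fm} (h : ∀ A ∈ l, entails Γ A) :
    entails Γ (bigAnd l) := by
  induction l with
  | nil => exact ⟨[], by simp, Prov.id _⟩
  | cons B l ih =>
    obtain ⟨γ1, hγ1, h1⟩ := h B (List.mem_cons_self)
    obtain ⟨γ2, hγ2, h2⟩ := ih fun A hA => h A (List.mem_cons_of_mem _ hA)
    refine ⟨γ1 ++ γ2, ?_, ?_⟩
    · intro A hA; rcases List.mem_append.1 hA with hA | hA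
      · exact hγ1 A hA
      · exact hγ2 A hA
    · exact andI (cut (bigAnd_sub fun A hA => List.mem_append.2 (Or.inl hA)) h1)
        (cut (bigAnd_sub fun A hA => List.mem_append.2 (Or.inr hA)) h2)

/-! ### state toolkit -/

section Canon

variable {Φ : Set Fm}

theorem zin_sub (z : CanState Φ) : z.1.1 ⊆ Φ := by
  intro A hA; rw [← z.2.2]; exact Or.inl hA

theorem zout_sub (z : CanState Φ) : z.1.2 ⊆ Φ := by
  intro A hA; rw [← z.2.2]; exact Or.inr hA

theorem not_entails_out (z : CanState Φ) {A : Fm} (hA : A ∈ z.1.2)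
    (h : entails z.1.1 A) : False := by
  obtain ⟨γ, hγ, hpr⟩ := h
  exact z.2.1 ⟨γ, [A], hγ, by simpa using hA, cut hpr (orI1 _ _)⟩

theorem not_entails_bot (z : CanState Φ) (h : entails z.1.1 Fm.bot) : False := by
  obtain ⟨γ, hγ, hpr⟩ := h
  exact z.2.1 ⟨γ, [], hγ, by simp, hpr⟩

theorem mem_of_entails (z : CanState Φ) {A : Fm} (hA : A ∈ Φ)
    (h : entails z.1.1 A) : A ∈ z.1.1 := by
  rw [← z.2.2] at hA
  rcases hA with hA | hA
  · exact hA
  · exact absurd h (fun h => not_entails_out z hA h)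

theorem mem_iff_entails (z : CanState Φ) {A : Fm} (hA : A ∈ Φ) :
    A ∈ z.1.1 ↔ entails z.1.1 A :=
  ⟨entails_of_mem, mem_of_entails z hA⟩

theorem prime_list (z : CanState Φ) {δ : List Fm} (hδ : ∀ D ∈ δ, D ∈ Φ)
    (h : entails z.1.1 (bigOr δ)) : ∃ D ∈ δ, D ∈ z.1.1 := by
  by_contra hc
  push_neg at hc
  obtain ⟨γ, hγ, hpr⟩ := h
  refine z.2.1 ⟨γ, δ, hγ, fun D hD => ?_, hpr⟩
  have := hδ D hD
  rw [← z.2.2] at this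
  rcases this with h' | h'
  · exact absurd h' (hc D hD)
  · exact h'

variable (hfin : Φ.Finite)

/-- The list of formulas in `z.1.1` (which is a subset of the finite set Φ). -/
noncomputable def chL (z : CanState Φ) : List Fm :=
  (hfin.toFinset.filter (· ∈ z.1.1)).toList

theorem mem_chL {z : CanState Φ} {A : Fm} : A ∈ chL hfin z ↔ A ∈ z.1.1 := by
  simp only [chL, Finset.mem_toList, Finset.mem_filter, Set.Finite.mem_toFinset]
  exact ⟨fun h => h.2, fun h => ⟨zin_sub z h, h⟩⟩

/-- The characteristic formula of a state. -/
noncomputable def ch (z : CanState Φ) : Fm := bigAnd (chL hfin z)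

theorem entails_iff_ch {z : CanState Φ} {G : Fm} :
    entails z.1.1 G ↔ Prov (ch hfin z) G := by
  constructor
  · rintro ⟨γ, hγ, hpr⟩
    exact cut (bigAnd_sub fun A hA => (mem_chL hfin).2 (hγ A hA)) hpr
  · intro h
    exact ⟨chL hfin z, fun A hA => (mem_chL hfin).1 hA, h⟩

end Canon

section Canon2
variable {Φ : Set Fm}

/-! ### maximal extension lemma -/

theorem exists_max_state (hfin : Φ.Finite)
    (Bad : Fm → Prop)
    (hmono : ∀ G G', Prov G' G → Bad G → Bad G')
    (hprime : ∀ G δ, (∀ D ∈ δ, D ∈ Φ) → Prov G (bigOr δ) →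
      (∀ D ∈ δ, Bad (G.and D)) → Bad G)
    (l0 : List Fm) (hl0 : ∀ A ∈ l0, A ∈ Φ) (h0 : ¬ Bad (bigAnd l0)) :
    ∃ t : CanState Φ, (∀ A ∈ l0, A ∈ t.1.1) ∧ ∀ G, entails t.1.1 G → ¬ Bad G := by
  classical
  set Φf := hfin.toFinset with hΦf
  -- step 1: find a maximal good finset
  have key : ∀ n (S : Finset Fm), S ⊆ Φf → ¬ Bad (bigAnd S.toList) →
      Φf.card - S.card ≤ n →
      ∃ T, S ⊆ T ∧ T ⊆ Φf ∧ ¬ Bad (bigAnd T.toList) ∧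
        ∀ D ∈ Φf, D ∉ T → Bad ((bigAnd T.toList).and D) := by
    intro n
    induction n with
    | zero =>
      intro S hS hgood hcard
      refine ⟨S, le_refl _, hS, hgood, fun D hD hDS => ?_⟩
      have : S = Φf := Finset.eq_of_subset_of_card_le hS (by omega)
      exact absurd (this ▸ hD) hDS
    | succ n ih =>
      intro S hS hgood hcard
      by_cases hex : ∃ D ∈ Φf, D ∉ S ∧ ¬ Bad (bigAnd (insert D S).toList)
      · obtain ⟨D, hDΦ, hDS, hgood'⟩ := hex
        have hcard' : Φf.card - (insert D S).card ≤ n := by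
          have h1 : (insert D S).card = S.card + 1 := Finset.card_insert_of_notMem hDS
          have h2 : (insert D S).card ≤ Φf.card :=
            Finset.card_le_card (Finset.insert_subset hDΦ hS)
          omega
        obtain ⟨T, hST, hTΦ, hTg, hTmax⟩ :=
          ih (insert D S) (Finset.insert_subset hDΦ hS) hgood' hcard'
        exact ⟨T, (Finset.subset_insert _ _).trans hST, hTΦ, hTg, hTmax⟩
      · push_neg at hex
        refine ⟨S, le_refl _, hS, hgood, fun D hD hDS => ?_⟩
        have hb := hex D hD hDS
        refine hmono _ _ ?_ (not_not.1 (fun hc => hc hb))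
        -- Prov ((bigAnd S.toList).and D) (bigAnd (insert D S).toList)
        apply bigAnd_intro
        intro A hA
        rw [Finset.mem_toList, Finset.mem_insert] at hA
        rcases hA with rfl | hA
        · exact andE2 _ _
        · exact cut (andE1 _ _) (bigAnd_elim (Finset.mem_toList.2 hA))
  -- initial finset
  have hstart : ¬ Bad (bigAnd l0.toFinset.toList) := by
    intro hb
    exact h0 (hmono _ _ (bigAnd_sub fun A hA => by
      rw [Finset.mem_toList, List.mem_toFinset] at hA; exact hA) hb)
  have hl0Φ : l0.toFinset ⊆ Φf := by
    intro A hA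
    rw [List.mem_toFinset] at hA
    exact (Set.Finite.mem_toFinset hfin).2 (hl0 A hA)
  obtain ⟨T, hST, hTΦ, hTg, hTmax⟩ :=
    key (Φf.card - l0.toFinset.card) l0.toFinset hl0Φ hstart (le_refl _)
  -- build the state
  have hTΦ' : (↑T : Set Fm) ⊆ Φ := by
    intro A hA
    exact (Set.Finite.mem_toFinset hfin).1 (hTΦ hA)
  have hunion : (↑T : Set Fm) ∪ (Φ \ ↑T) = Φ := Set.union_diff_cancel hTΦ'
  have hindep : IndepPair (↑T : Set Fm) (Φ \ ↑T) := by
    rintro ⟨γ, δ, hγ, hδ, hpr⟩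
    have hGδ : Prov (bigAnd T.toList) (bigOr δ) :=
      cut (bigAnd_sub fun A hA => Finset.mem_toList.2 (hγ A hA)) hpr
    have hBadT : Bad (bigAnd T.toList) := by
      refine hprime _ δ (fun D hD => ((hδ D hD).1)) hGδ fun D hD => ?_
      have hDout := hδ D hD
      exact hTmax D ((Set.Finite.mem_toFinset hfin).2 hDout.1) hDout.2
    exact hTg hBadT
  refine ⟨⟨(↑T, Φ \ ↑T), hindep, hunion⟩, ?_, ?_⟩
  · intro A hA
    exact hST (List.mem_toFinset.2 hA)
  · rintro G ⟨γ, hγ, hpr⟩ hBad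
    apply hTg
    refine hmono _ _ (bigAnd_sub fun A hA => Finset.mem_toList.2 (hγ A hA)) ?_
    exact hmono _ _ hpr hBad

end Canon2
end TL

namespace TL
open Fm Prov

theorem prime_of_prov {G C : Fm} {δ : List Fm} (hGδ : Prov G (bigOr δ))
    (hall : ∀ D ∈ δ, Prov (G.and D) C) : Prov G C := by
  refine cut (cut (andI (Prov.id G) hGδ) and_bigOr_distrib) ?_
  apply bigOr_elim
  intro X hX
  obtain ⟨D, hD, rfl⟩ := List.mem_map.1 hX
  exact hall D hD

section Exist

variable {Φ : Set Fm}

/-- Existence lemma for left division. -/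
theorem exists_ldiv (hfin : Φ.Finite) {w : CanState Φ} {A : Fm} (hA : A ∈ Φ) (C : Fm)
    (h : ¬ entails w.1.1 (A.ldiv C)) :
    ∃ t u : CanState Φ, A ∈ t.1.1 ∧ canR Φ t w u ∧ ¬ entails u.1.1 C := by
  classical
  -- step 1: build t
  obtain ⟨t, htA, htprop⟩ :=
    exists_max_state hfin (fun G => entails w.1.1 (G.ldiv C))
      (fun G G' hp hb => entails_cut hb (ldiv_mono hp (Prov.id C)))
      (fun G δ hδΦ hGδ hall => by
        have h1 : entails w.1.1 (bigAnd (δ.map fun D => (G.and D).ldiv C)) := by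
          apply entails_bigAnd
          intro X hX
          obtain ⟨D, hD, rfl⟩ := List.mem_map.1 hX
          exact hall D hD
        refine entails_cut h1 ?_
        have h2 : Prov (bigAnd ((δ.map (G.and ·)).map (·.ldiv C)))
            ((bigOr (δ.map (G.and ·))).ldiv C) := bigOr_ldiv
        rw [List.map_map] at h2
        refine cut h2 (ldiv_mono ?_ (Prov.id C))
        exact cut (andI (Prov.id G) hGδ) and_bigOr_distrib)
      [A] (by simpa using hA)
      (fun hb => h (entails_cut hb (ldiv_mono (andI (Prov.id A) (top A)) (Prov.id C))))
  have htA' : A ∈ t.1.1 := htA A (by simp)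
  -- step 2: build u
  set P : Fm → Prop :=
    fun B' => ∃ A', A' ∈ Φ ∧ entails t.1.1 A' ∧ entails w.1.1 (A'.ldiv B') with hP
  set Γu : List Fm := (hfin.toFinset.filter P).toList with hΓu
  have hΓuΦ : ∀ B' ∈ Γu, B' ∈ Φ := by
    intro B' hB'
    rw [hΓu, Finset.mem_toList, Finset.mem_filter, Set.Finite.mem_toFinset] at hB'
    exact hB'.1
  have hΓuP : ∀ B' ∈ Γu, P B' := by
    intro B' hB'
    rw [hΓu, Finset.mem_toList, Finset.mem_filter] at hB'
    exact hB'.2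
  have h0u : ¬ Prov (bigAnd Γu) C := by
    intro hpr
    set f : Fm → Fm := fun B' => if h : P B' then Classical.choose h else Fm.top with hf
    have hfs : ∀ B' ∈ Γu, entails t.1.1 (f B') ∧ entails w.1.1 ((f B').ldiv B') := by
      intro B' hB'
      have hPB := hΓuP B' hB'
      rw [hf]; simp only [dif_pos hPB]
      obtain ⟨_, h2, h3⟩ := Classical.choose_spec hPB
      exact ⟨h2, h3⟩
    set As : Fm := bigAnd (Γu.map f) with hAs
    have htAs : entails t.1.1 As := by
      apply entails_bigAnd
      intro X hX
      obtain ⟨B', hB', rfl⟩ := List.mem_map.1 hX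
      exact (hfs B' hB').1
    have hwAs : entails w.1.1 (As.ldiv C) := by
      have h1 : entails w.1.1 (bigAnd (Γu.map fun B' => As.ldiv B')) := by
        apply entails_bigAnd
        intro X hX
        obtain ⟨B', hB', rfl⟩ := List.mem_map.1 hX
        refine entails_cut (hfs B' hB').2 (ldiv_mono ?_ (Prov.id _))
        exact bigAnd_elim (List.mem_map.2 ⟨B', hB', rfl⟩)
      have h2 : Prov (bigAnd (Γu.map fun B' => As.ldiv B')) (As.ldiv (bigAnd Γu)) :=
        ldiv_bigAnd
      exact entails_cut (entails_cut h1 h2) (ldiv_mono (Prov.id _) hpr)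
    exact htprop As htAs hwAs
  obtain ⟨u, huΓ, huprop⟩ :=
    exists_max_state hfin (fun G => Prov G C)
      (fun G G' hp hb => cut hp hb)
      (fun G δ hδΦ hGδ hall => prime_of_prov hGδ hall)
      Γu hΓuΦ h0u
  refine ⟨t, u, htA', ?_, fun hc => huprop C hc (Prov.id C)⟩
  intro A' B' hA' hB' hta hwab
  apply entails_of_mem
  apply huΓ
  rw [hΓu, Finset.mem_toList, Finset.mem_filter, Set.Finite.mem_toFinset]
  exact ⟨hB', A', hA', hta, hwab⟩

/-- Existence lemma for right division. -/
theorem exists_rdiv (hfin : Φ.Finite) {w : CanState Φ} {A : Fm} (hA : A ∈ Φ) (C : Fm)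
    (h : ¬ entails w.1.1 (C.rdiv A)) :
    ∃ t u : CanState Φ, A ∈ t.1.1 ∧ canR Φ w t u ∧ ¬ entails u.1.1 C := by
  classical
  set K : Fm := (ch hfin w).ldiv C with hK
  obtain ⟨t, htA, htprop⟩ :=
    exists_max_state hfin (fun G => Prov G K)
      (fun G G' hp hb => cut hp hb)
      (fun G δ hδΦ hGδ hall => prime_of_prov hGδ hall)
      [A] (by simpa using hA)
      (fun hb => by
        apply h
        rw [entails_iff_ch hfin]
        apply resR1
        refine cut (prod_mono (Prov.id _) (andI (Prov.id A) (top A))) ?_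
        exact resL2 hb)
  have htA' : A ∈ t.1.1 := htA A (by simp)
  set P : Fm → Prop :=
    fun B' => ∃ A', A' ∈ Φ ∧ entails w.1.1 A' ∧ entails t.1.1 (A'.ldiv B') with hP
  set Γu : List Fm := (hfin.toFinset.filter P).toList with hΓu
  have hΓuΦ : ∀ B' ∈ Γu, B' ∈ Φ := by
    intro B' hB'
    rw [hΓu, Finset.mem_toList, Finset.mem_filter, Set.Finite.mem_toFinset] at hB'
    exact hB'.1
  have hΓuP : ∀ B' ∈ Γu, P B' := by
    intro B' hB'
    rw [hΓu, Finset.mem_toList, Finset.mem_filter] at hB'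
    exact hB'.2
  have h0u : ¬ Prov (bigAnd Γu) C := by
    intro hpr
    set f : Fm → Fm := fun B' => if h : P B' then Classical.choose h else Fm.top with hf
    have hfs : ∀ B' ∈ Γu, entails w.1.1 (f B') ∧ entails t.1.1 ((f B').ldiv B') := by
      intro B' hB'
      have hPB := hΓuP B' hB'
      rw [hf]; simp only [dif_pos hPB]
      obtain ⟨_, h2, h3⟩ := Classical.choose_spec hPB
      exact ⟨h2, h3⟩
    set As : Fm := bigAnd (Γu.map f) with hAs
    have hwAs : entails w.1.1 As := by
      apply entails_bigAnd
      intro X hX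
      obtain ⟨B', hB', rfl⟩ := List.mem_map.1 hX
      exact (hfs B' hB').1
    have htAs : entails t.1.1 (As.ldiv C) := by
      have h1 : entails t.1.1 (bigAnd (Γu.map fun B' => As.ldiv B')) := by
        apply entails_bigAnd
        intro X hX
        obtain ⟨B', hB', rfl⟩ := List.mem_map.1 hX
        refine entails_cut (hfs B' hB').2 (ldiv_mono ?_ (Prov.id _))
        exact bigAnd_elim (List.mem_map.2 ⟨B', hB', rfl⟩)
      have h2 : Prov (bigAnd (Γu.map fun B' => As.ldiv B')) (As.ldiv (bigAnd Γu)) :=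
        ldiv_bigAnd
      exact entails_cut (entails_cut h1 h2) (ldiv_mono (Prov.id _) hpr)
    refine htprop (As.ldiv C) htAs ?_
    exact ldiv_mono ((entails_iff_ch hfin).1 hwAs) (Prov.id C)
  obtain ⟨u, huΓ, huprop⟩ :=
    exists_max_state hfin (fun G => Prov G C)
      (fun G G' hp hb => cut hp hb)
      (fun G δ hδΦ hGδ hall => prime_of_prov hGδ hall)
      Γu hΓuΦ h0u
  refine ⟨t, u, htA', ?_, fun hc => huprop C hc (Prov.id C)⟩
  intro A' B' hA' hB' hwa htab
  apply entails_of_mem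
  apply huΓ
  rw [hΓu, Finset.mem_toList, Finset.mem_filter, Set.Finite.mem_toFinset]
  exact ⟨hB', A', hA', hwa, htab⟩

/-- Existence lemma for product. -/
theorem exists_prod (hfin : Φ.Finite) {z : CanState Φ} {A B : Fm} (hAΦ : A ∈ Φ) (hBΦ : B ∈ Φ)
    (h : entails z.1.1 (A.prod B)) :
    ∃ t u : CanState Φ, A ∈ t.1.1 ∧ B ∈ u.1.1 ∧ canR Φ t u z := by
  classical
  -- combination helper
  have comb : ∀ (F : Fm → Fm) (δc : List Fm),
      (∀ D ∈ δc, ∃ δ, (∀ D' ∈ δ, D' ∈ Φ) ∧ Prov (F D) (bigOr δ) ∧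
        ¬ entails z.1.1 (bigOr δ)) →
      ∃ δs, (∀ D' ∈ δs, D' ∈ Φ) ∧ (∀ D ∈ δc, Prov (F D) (bigOr δs)) ∧
        ¬ entails z.1.1 (bigOr δs) := by
    intro F δc
    induction δc with
    | nil => exact fun _ => ⟨[], by simp, by simp, fun hc => not_entails_bot z hc⟩
    | cons D δc ih =>
      intro hall
      obtain ⟨δ1, hδ1Φ, hpr1, hne1⟩ := hall D (List.mem_cons_self)
      obtain ⟨δ2, hδ2Φ, hpr2, hne2⟩ := ih fun D' hD' => hall D' (List.mem_cons_of_mem _ hD')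
      refine ⟨δ1 ++ δ2, ?_, ?_, ?_⟩
      · intro D' hD'; rcases List.mem_append.1 hD' with h' | h'
        · exact hδ1Φ D' h'
        · exact hδ2Φ D' h'
      · intro D' hD'
        rcases List.mem_cons.1 hD' with rfl | hD'
        · exact cut hpr1 (bigOr_sub fun X hX => List.mem_append.2 (Or.inl hX))
        · exact cut (hpr2 D' hD') (bigOr_sub fun X hX => List.mem_append.2 (Or.inr hX))
      · intro hc
        obtain ⟨D', hD', hmem⟩ := prime_list z (fun D' hD' => by
          rcases List.mem_append.1 hD' with h' | h'
          · exact hδ1Φ D' h'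
          · exact hδ2Φ D' h') hc
        rcases List.mem_append.1 hD' with h' | h'
        · exact hne1 (entails_cut (entails_of_mem hmem) (bigOr_intro h'))
        · exact hne2 (entails_cut (entails_of_mem hmem) (bigOr_intro h'))
  -- t
  obtain ⟨t, htA, htprop⟩ :=
    exists_max_state hfin
      (fun G => ∃ δ, (∀ D' ∈ δ, D' ∈ Φ) ∧ Prov (G.prod B) (bigOr δ) ∧
        ¬ entails z.1.1 (bigOr δ))
      (fun G G' hp => by
        rintro ⟨δ, h1, h2, h3⟩
        exact ⟨δ, h1, cut (prod_mono hp (Prov.id _)) h2, h3⟩)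
      (fun G δ hδΦ hGδ hall => by
        obtain ⟨δs, h1, h2, h3⟩ := comb (fun D => (G.and D).prod B) δ hall
        refine ⟨δs, h1, ?_, h3⟩
        refine cut (prod_mono (cut (andI (Prov.id G) hGδ) and_bigOr_distrib) (Prov.id B)) ?_
        refine cut prod_bigOr_left ?_
        apply bigOr_elim
        intro X hX
        rw [List.map_map] at hX
        obtain ⟨D, hD, rfl⟩ := List.mem_map.1 hX
        exact h2 D hD)
      [A] (by simpa using hAΦ)
      (by
        rintro ⟨δ, h1, h2, h3⟩
        exact h3 (entails_cut h
          (cut (prod_mono (andI (Prov.id A) (top A)) (Prov.id B)) h2)))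
  have htA' : A ∈ t.1.1 := htA A (by simp)
  -- u
  obtain ⟨u, huB, huprop⟩ :=
    exists_max_state hfin
      (fun G => ∃ δ, (∀ D' ∈ δ, D' ∈ Φ) ∧ Prov ((ch hfin t).prod G) (bigOr δ) ∧
        ¬ entails z.1.1 (bigOr δ))
      (fun G G' hp => by
        rintro ⟨δ, h1, h2, h3⟩
        exact ⟨δ, h1, cut (prod_mono (Prov.id _) hp) h2, h3⟩)
      (fun G δ hδΦ hGδ hall => by
        obtain ⟨δs, h1, h2, h3⟩ := comb (fun D => (ch hfin t).prod (G.and D)) δ hall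
        refine ⟨δs, h1, ?_, h3⟩
        refine cut (prod_mono (Prov.id _) (cut (andI (Prov.id G) hGδ) and_bigOr_distrib)) ?_
        refine cut prod_bigOr_right ?_
        apply bigOr_elim
        intro X hX
        rw [List.map_map] at hX
        obtain ⟨D, hD, rfl⟩ := List.mem_map.1 hX
        exact h2 D hD)
      [B] (by simpa using hBΦ)
      (by
        rintro ⟨δ, h1, h2, h3⟩
        refine htprop (ch hfin t) ((entails_iff_ch hfin).2 (Prov.id _)) ?_
        exact ⟨δ, h1, cut (prod_mono (Prov.id _) (andI (Prov.id B) (top B))) h2, h3⟩)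
  have huB' : B ∈ u.1.1 := huB B (by simp)
  refine ⟨t, u, htA', huB', ?_⟩
  intro A' B' hA' hB' hta hub
  have hne := huprop (ch hfin u) ((entails_iff_ch hfin).2 (Prov.id _))
  have hpr : Prov ((ch hfin t).prod (ch hfin u)) (bigOr [B']) := by
    refine cut (prod_mono ((entails_iff_ch hfin).1 hta) ((entails_iff_ch hfin).1 hub)) ?_
    exact cut (resL2 (Prov.id _)) (orI1 _ _)
  by_contra hc
  exact hne ⟨[B'], by simpa using hB', hpr, fun h' => hc (entails_cut h' (orE (Prov.id _) (bot _)))⟩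

end Exist
end TL

namespace TL
open Fm Prov

theorem entails_and {Γ : Set Fm} {A B : Fm} (h1 : entails Γ A) (h2 : entails Γ B) :
    entails Γ (A.and B) := by
  have h := entails_bigAnd (Γ := Γ) (l := [A, B]) (by
    intro X hX
    rcases List.mem_cons.1 hX with rfl | hX
    · exact h1
    · rcases List.mem_cons.1 hX with rfl | hX
      · exact h2
      · cases hX)
  exact entails_cut h (andI (bigAnd_elim (by simp)) (bigAnd_elim (by simp)))

section Path

variable {Φ : Set Fm}

theorem mem_of_closure {A : Fm} (hcl : ClosedSet Φ) (h : Closure Φ A) : A ∈ Φ := by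
  rw [← hcl]; exact h

/-- From a ∖∖-satisfying state, one canR-step along an A-state preserves ∖∖-satisfaction. -/
theorem sat_ildiv_step {A B : Fm} {w t u : CanState Φ}
    (hw : sat (canModel Φ) (A.ildiv B) w) (hR : canR Φ t w u)
    (hA : sat (canModel Φ) A t) : sat (canModel Φ) (A.ildiv B) u := by
  intro xs v hne hRl hall
  apply hw (t :: xs) v (by simp)
  · cases xs with
    | nil => exact absurd rfl hne
    | cons y ys => exact ⟨u, hR, hRl⟩
  · intro x hx
    rcases List.mem_cons.1 hx with rfl | hx
    · exact hA
    · exact hall x hx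

theorem sat_irdiv_step {A B : Fm} {w t u : CanState Φ}
    (hw : sat (canModel Φ) (B.irdiv A) w) (hR : canR Φ w t u)
    (hA : sat (canModel Φ) A t) : sat (canModel Φ) (B.irdiv A) u := by
  intro xs v hne hRl hall
  apply hw (t :: xs) v (by simp)
  · cases xs with
    | nil => exact absurd rfl hne
    | cons y ys => exact ⟨u, hR, hRl⟩
  · intro x hx
    rcases List.mem_cons.1 hx with rfl | hx
    · exact hA
    · exact hall x hx

theorem sat_ildiv_ldiv {A B : Fm} {w : CanState Φ}
    (hw : sat (canModel Φ) (A.ildiv B) w) : sat (canModel Φ) (A.ldiv B) w := by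
  intro t u hR hA
  apply hw [t] u (by simp) hR
  intro x hx
  rcases List.mem_cons.1 hx with rfl | hx
  · exact hA
  · cases hx

theorem sat_irdiv_rdiv {A B : Fm} {w : CanState Φ}
    (hw : sat (canModel Φ) (B.irdiv A) w) : sat (canModel Φ) (B.rdiv A) w := by
  intro t u hR hA
  apply hw [t] u (by simp) hR
  intro x hx
  rcases List.mem_cons.1 hx with rfl | hx
  · exact hA
  · cases hx

/-- Forward truth for iterative left division, along a path. -/
theorem ildiv_forward {A B : Fm} (hA : A ∈ Φ) (hB : B ∈ Φ) (hAB : A.ildiv B ∈ Φ) :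
    ∀ xs : List (CanState Φ), ∀ z t : CanState Φ, xs ≠ [] →
      entails z.1.1 (A.ildiv B) → Rleft (canR Φ) xs z t →
      (∀ x ∈ xs, entails x.1.1 A) → entails t.1.1 B := by
  intro xs
  induction xs with
  | nil => intro z t hne; exact absurd rfl hne
  | cons x xs ih =>
    intro z t _ hz hR hall
    cases xs with
    | nil =>
      have hcR : canR Φ x z t := hR
      exact hcR A B hA hB (hall x (List.mem_cons_self))
        (entails_cut hz (cut (ildivUnfold A B) (andE1 _ _)))
    | cons y ys =>
      obtain ⟨w', h1, h2⟩ : ∃ w', canR Φ x z w' ∧ Rleft (canR Φ) (y :: ys) w' t := hR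
      have hw' : entails w'.1.1 (A.ildiv B) :=
        h1 A (A.ildiv B) hA hAB (hall x (List.mem_cons_self))
          (entails_cut hz (cut (ildivUnfold A B) (andE2 _ _)))
      exact ih w' t (by simp) hw' h2 fun v hv => hall v (List.mem_cons_of_mem _ hv)

/-- Forward truth for iterative right division, along a path. -/
theorem irdiv_forward {A B : Fm} (hA : A ∈ Φ) (hB : B ∈ Φ) (hAB : B.irdiv A ∈ Φ) :
    ∀ xs : List (CanState Φ), ∀ z t : CanState Φ, xs ≠ [] →
      entails z.1.1 (B.irdiv A) → Rright (canR Φ) z xs t →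
      (∀ x ∈ xs, entails x.1.1 A) → entails t.1.1 B := by
  intro xs
  induction xs with
  | nil => intro z t hne; exact absurd rfl hne
  | cons x xs ih =>
    intro z t _ hz hR hall
    cases xs with
    | nil =>
      have hcR : canR Φ z x t := hR
      refine hcR (B.irdiv A) B hAB hB hz ?_
      refine entails_cut (hall x (List.mem_cons_self)) ?_
      exact resL1 (resR2 (cut (irdivUnfold A B) (andE1 _ _)))
    | cons y ys =>
      obtain ⟨w', h1, h2⟩ : ∃ w', canR Φ z x w' ∧ Rright (canR Φ) w' (y :: ys) t := hR
      have hw' : entails w'.1.1 (B.irdiv A) := by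
        refine h1 (B.irdiv A) (B.irdiv A) hAB hAB hz ?_
        refine entails_cut (hall x (List.mem_cons_self)) ?_
        exact resL1 (resR2 (cut (irdivUnfold A B) (andE2 _ _)))
      exact ih w' t (by simp) hw' h2 fun v hv => hall v (List.mem_cons_of_mem _ hv)

end Path
end TL

namespace TL
open Fm Prov

section Cases

variable {Φ : Set Fm}

theorem prod_case (hfin : Φ.Finite) {A B : Fm} (hA : A ∈ Φ) (hB : B ∈ Φ) (hAB : A.prod B ∈ Φ)
    (ihA : ∀ x : CanState Φ, A ∈ x.1.1 ↔ sat (canModel Φ) A x)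
    (ihB : ∀ x : CanState Φ, B ∈ x.1.1 ↔ sat (canModel Φ) B x)
    (z : CanState Φ) : A.prod B ∈ z.1.1 ↔ sat (canModel Φ) (A.prod B) z := by
  constructor
  · intro hmem
    obtain ⟨t, u, htA, huB, hR⟩ := exists_prod hfin hA hB (entails_of_mem hmem)
    exact ⟨t, u, hR, (ihA t).1 htA, (ihB u).1 huB⟩
  · rintro ⟨t, u, hR, hsA, hsB⟩
    apply mem_of_entails z hAB
    refine hR A (A.prod B) hA hAB (entails_of_mem ((ihA t).2 hsA)) ?_
    exact entails_cut (entails_of_mem ((ihB u).2 hsB)) (resL1 (Prov.id (A.prod B)))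

theorem ldiv_case (hfin : Φ.Finite) {A B : Fm} (hA : A ∈ Φ) (hB : B ∈ Φ) (hAB : A.ldiv B ∈ Φ)
    (ihA : ∀ x : CanState Φ, A ∈ x.1.1 ↔ sat (canModel Φ) A x)
    (ihB : ∀ x : CanState Φ, B ∈ x.1.1 ↔ sat (canModel Φ) B x)
    (z : CanState Φ) : A.ldiv B ∈ z.1.1 ↔ sat (canModel Φ) (A.ldiv B) z := by
  constructor
  · intro hmem t u hR hsA
    refine (ihB u).1 (mem_of_entails u hB ?_)
    exact hR A B hA hB (entails_of_mem ((ihA t).2 hsA)) (entails_of_mem hmem)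
  · intro hsat
    apply mem_of_entails z hAB
    by_contra hne
    obtain ⟨t, u, htA, hR, hnu⟩ := exists_ldiv hfin hA B hne
    exact hnu (entails_of_mem ((ihB u).2 (hsat t u hR ((ihA t).1 htA))))

theorem rdiv_case (hfin : Φ.Finite) {A B : Fm} (hA : A ∈ Φ) (hB : B ∈ Φ) (hAB : B.rdiv A ∈ Φ)
    (ihA : ∀ x : CanState Φ, A ∈ x.1.1 ↔ sat (canModel Φ) A x)
    (ihB : ∀ x : CanState Φ, B ∈ x.1.1 ↔ sat (canModel Φ) B x)
    (z : CanState Φ) : B.rdiv A ∈ z.1.1 ↔ sat (canModel Φ) (B.rdiv A) z := by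
  constructor
  · intro hmem t u hR hsA
    refine (ihB u).1 (mem_of_entails u hB ?_)
    refine hR (B.rdiv A) B hAB hB (entails_of_mem hmem) ?_
    exact entails_cut (entails_of_mem ((ihA t).2 hsA)) (resL1 (resR2 (Prov.id (B.rdiv A))))
  · intro hsat
    apply mem_of_entails z hAB
    by_contra hne
    obtain ⟨t, u, htA, hR, hnu⟩ := exists_rdiv hfin hA B hne
    exact hnu (entails_of_mem ((ihB u).2 (hsat t u hR ((ihA t).1 htA))))

theorem ildiv_case (hfin : Φ.Finite) (hcl : ClosedSet Φ) {A B : Fm}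
    (hA : A ∈ Φ) (hB : B ∈ Φ) (hAB : A.ildiv B ∈ Φ)
    (ihA : ∀ x : CanState Φ, A ∈ x.1.1 ↔ sat (canModel Φ) A x)
    (ihB : ∀ x : CanState Φ, B ∈ x.1.1 ↔ sat (canModel Φ) B x)
    (z : CanState Φ) : A.ildiv B ∈ z.1.1 ↔ sat (canModel Φ) (A.ildiv B) z := by
  classical
  have hAB' : A.ldiv B ∈ Φ := mem_of_closure hcl (Closure.ildivDiv (Closure.base hAB))
  constructor
  · intro hmem xs t hne hR hall
    refine (ihB t).1 (mem_of_entails t hB ?_)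
    refine ildiv_forward hA hB hAB xs z t hne (entails_of_mem hmem) hR ?_
    exact fun x hx => entails_of_mem ((ihA x).2 (hall x hx))
  · intro hsat
    set Φf := hfin.toFinset with hΦf
    set SatSet : Finset (Finset Fm) := Φf.powerset.filter
      (fun S => ∃ w : CanState Φ, w.1.1 = ↑S ∧ sat (canModel Φ) (A.ildiv B) w) with hSS
    set X : Fm := bigOr (SatSet.toList.map (fun S => bigAnd S.toList)) with hX
    -- F1
    have F1 : ∀ w : CanState Φ, sat (canModel Φ) (A.ildiv B) w → Prov (ch hfin w) X := by
      intro w hw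
      set Sw : Finset Fm := Φf.filter (· ∈ w.1.1) with hSw
      have hSwc : (↑Sw : Set Fm) = w.1.1 := by
        ext A'
        simp only [hSw, Finset.coe_filter, Set.mem_setOf_eq, Set.Finite.mem_toFinset, hΦf]
        exact ⟨fun h => h.2, fun h => ⟨zin_sub w h, h⟩⟩
      have hSwmem : Sw ∈ SatSet := by
        rw [hSS, Finset.mem_filter, Finset.mem_powerset]
        exact ⟨Finset.filter_subset _ _, w, hSwc.symm, hw⟩
      refine cut (bigAnd_sub ?_) (bigOr_intro (List.mem_map.2 ⟨Sw, Finset.mem_toList.2 hSwmem, rfl⟩))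
      intro A' hA'
      rw [Finset.mem_toList] at hA'
      refine (mem_chL hfin).2 ?_
      rw [← hSwc]
      exact hA'
    -- F2
    have F2 : Prov X (A.ldiv B) := by
      apply bigOr_elim
      intro X' hX'
      obtain ⟨S, hS, rfl⟩ := List.mem_map.1 hX'
      rw [Finset.mem_toList, hSS, Finset.mem_filter] at hS
      obtain ⟨-, w, hweq, hwsat⟩ := hS
      have hmem : A.ldiv B ∈ w.1.1 :=
        (ldiv_case hfin hA hB hAB' ihA ihB w).2 (sat_ildiv_ldiv hwsat)
      refine cut (bigAnd_sub ?_) ((entails_iff_ch hfin).1 (entails_of_mem hmem))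
      intro A' hA'
      have h' : A' ∈ (↑S : Set Fm) := by rw [← hweq]; exact (mem_chL hfin).1 hA'
      exact Finset.mem_toList.2 (Finset.mem_coe.1 h')
    -- F3
    have F3 : Prov X (A.ldiv X) := by
      apply bigOr_elim
      intro X' hX'
      obtain ⟨S, hS, rfl⟩ := List.mem_map.1 hX'
      rw [Finset.mem_toList, hSS, Finset.mem_filter] at hS
      obtain ⟨-, w, hweq, hwsat⟩ := hS
      have hch : Prov (ch hfin w) (A.ldiv X) := by
        by_contra hnp
        have hne : ¬ entails w.1.1 (A.ldiv X) := fun h => hnp ((entails_iff_ch hfin).1 h)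
        obtain ⟨t, u, htA, hR, hnu⟩ := exists_ldiv hfin hA X hne
        have hsatu : sat (canModel Φ) (A.ildiv B) u :=
          sat_ildiv_step hwsat hR ((ihA t).1 htA)
        exact hnu ((entails_iff_ch hfin).2 (F1 u hsatu))
      refine cut (bigAnd_sub ?_) hch
      intro A' hA'
      have h' : A' ∈ (↑S : Set Fm) := by rw [← hweq]; exact (mem_chL hfin).1 hA'
      exact Finset.mem_toList.2 (Finset.mem_coe.1 h')
    have hXild : Prov X (A.ildiv B) := ildiv_coind F2 F3
    apply mem_of_entails z hAB
    exact entails_cut ((entails_iff_ch hfin).2 (F1 z hsat)) hXild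

theorem irdiv_case (hfin : Φ.Finite) (hcl : ClosedSet Φ) {A B : Fm}
    (hA : A ∈ Φ) (hB : B ∈ Φ) (hAB : B.irdiv A ∈ Φ)
    (ihA : ∀ x : CanState Φ, A ∈ x.1.1 ↔ sat (canModel Φ) A x)
    (ihB : ∀ x : CanState Φ, B ∈ x.1.1 ↔ sat (canModel Φ) B x)
    (z : CanState Φ) : B.irdiv A ∈ z.1.1 ↔ sat (canModel Φ) (B.irdiv A) z := by
  classical
  have hAB' : B.rdiv A ∈ Φ := mem_of_closure hcl (Closure.irdivDiv (Closure.base hAB))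
  constructor
  · intro hmem xs t hne hR hall
    refine (ihB t).1 (mem_of_entails t hB ?_)
    refine irdiv_forward hA hB hAB xs z t hne (entails_of_mem hmem) hR ?_
    exact fun x hx => entails_of_mem ((ihA x).2 (hall x hx))
  · intro hsat
    set Φf := hfin.toFinset with hΦf
    set SatSet : Finset (Finset Fm) := Φf.powerset.filter
      (fun S => ∃ w : CanState Φ, w.1.1 = ↑S ∧ sat (canModel Φ) (B.irdiv A) w) with hSS
    set X : Fm := bigOr (SatSet.toList.map (fun S => bigAnd S.toList)) with hX
    have F1 : ∀ w : CanState Φ, sat (canModel Φ) (B.irdiv A) w → Prov (ch hfin w) X := by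
      intro w hw
      set Sw : Finset Fm := Φf.filter (· ∈ w.1.1) with hSw
      have hSwc : (↑Sw : Set Fm) = w.1.1 := by
        ext A'
        simp only [hSw, Finset.coe_filter, Set.mem_setOf_eq, Set.Finite.mem_toFinset, hΦf]
        exact ⟨fun h => h.2, fun h => ⟨zin_sub w h, h⟩⟩
      have hSwmem : Sw ∈ SatSet := by
        rw [hSS, Finset.mem_filter, Finset.mem_powerset]
        exact ⟨Finset.filter_subset _ _, w, hSwc.symm, hw⟩
      refine cut (bigAnd_sub ?_) (bigOr_intro (List.mem_map.2 ⟨Sw, Finset.mem_toList.2 hSwmem, rfl⟩))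
      intro A' hA'
      rw [Finset.mem_toList] at hA'
      refine (mem_chL hfin).2 ?_
      rw [← hSwc]
      exact hA'
    have F2 : Prov X (B.rdiv A) := by
      apply bigOr_elim
      intro X' hX'
      obtain ⟨S, hS, rfl⟩ := List.mem_map.1 hX'
      rw [Finset.mem_toList, hSS, Finset.mem_filter] at hS
      obtain ⟨-, w, hweq, hwsat⟩ := hS
      have hmem : B.rdiv A ∈ w.1.1 :=
        (rdiv_case hfin hA hB hAB' ihA ihB w).2 (sat_irdiv_rdiv hwsat)
      refine cut (bigAnd_sub ?_) ((entails_iff_ch hfin).1 (entails_of_mem hmem))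
      intro A' hA'
      have h' : A' ∈ (↑S : Set Fm) := by rw [← hweq]; exact (mem_chL hfin).1 hA'
      exact Finset.mem_toList.2 (Finset.mem_coe.1 h')
    have F3 : Prov X (X.rdiv A) := by
      apply bigOr_elim
      intro X' hX'
      obtain ⟨S, hS, rfl⟩ := List.mem_map.1 hX'
      rw [Finset.mem_toList, hSS, Finset.mem_filter] at hS
      obtain ⟨-, w, hweq, hwsat⟩ := hS
      have hch : Prov (ch hfin w) (X.rdiv A) := by
        by_contra hnp
        have hne : ¬ entails w.1.1 (X.rdiv A) := fun h => hnp ((entails_iff_ch hfin).1 h)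
        obtain ⟨t, u, htA, hR, hnu⟩ := exists_rdiv hfin hA X hne
        have hsatu : sat (canModel Φ) (B.irdiv A) u :=
          sat_irdiv_step hwsat hR ((ihA t).1 htA)
        exact hnu ((entails_iff_ch hfin).2 (F1 u hsatu))
      refine cut (bigAnd_sub ?_) hch
      intro A' hA'
      have h' : A' ∈ (↑S : Set Fm) := by rw [← hweq]; exact (mem_chL hfin).1 hA'
      exact Finset.mem_toList.2 (Finset.mem_coe.1 h')
    have hXird : Prov X (B.irdiv A) := irdiv_coind F2 F3
    apply mem_of_entails z hAB
    exact entails_cut ((entails_iff_ch hfin).2 (F1 z hsat)) hXird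

/-! ### main induction -/

theorem truth_aux (hfin : Φ.Finite) (hcl : ClosedSet Φ) :
    ∀ E : Fm, E ∈ Φ → ∀ z : CanState Φ,
      (E ∈ z.1.1 ↔ sat (canModel Φ) E z) := by
  intro E
  induction E with
  | var p =>
    intro hE z
    constructor
    · intro h; exact ⟨hE, h⟩
    · rintro ⟨-, h⟩; exact h
  | top =>
    intro hE z
    simp only [sat, iff_true]
    exact mem_of_entails z hE ⟨[], by simp, top _⟩
  | bot =>
    intro hE z
    simp only [sat, iff_false]
    exact fun h => not_entails_bot z (entails_of_mem h)
  | and A B ihA ihB =>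
    intro hE z
    have hA : A ∈ Φ := mem_of_closure hcl (Closure.andL (Closure.base hE))
    have hB : B ∈ Φ := mem_of_closure hcl (Closure.andR (Closure.base hE))
    constructor
    · intro h
      exact ⟨(ihA hA z).1 (mem_of_entails z hA (entails_cut (entails_of_mem h) (andE1 _ _))),
             (ihB hB z).1 (mem_of_entails z hB (entails_cut (entails_of_mem h) (andE2 _ _)))⟩
    · rintro ⟨h1, h2⟩
      apply mem_of_entails z hE
      exact entails_and (entails_of_mem ((ihA hA z).2 h1)) (entails_of_mem ((ihB hB z).2 h2))
  | or A B ihA ihB =>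
    intro hE z
    have hA : A ∈ Φ := mem_of_closure hcl (Closure.orL (Closure.base hE))
    have hB : B ∈ Φ := mem_of_closure hcl (Closure.orR (Closure.base hE))
    constructor
    · intro h
      have hent : entails z.1.1 (bigOr [A, B]) :=
        entails_cut (entails_of_mem h) (or_mono (Prov.id _) (orI1 _ _))
      obtain ⟨D, hD, hDz⟩ := prime_list z (by
        intro D hD
        rcases List.mem_cons.1 hD with rfl | hD
        · exact hA
        · rcases List.mem_cons.1 hD with rfl | hD
          · exact hB
          · cases hD) hent
      rcases List.mem_cons.1 hD with rfl | hD
      · exact Or.inl ((ihA hA z).1 hDz)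
      · rcases List.mem_cons.1 hD with rfl | hD
        · exact Or.inr ((ihB hB z).1 hDz)
        · cases hD
    · intro h
      apply mem_of_entails z hE
      rcases h with h | h
      · exact entails_cut (entails_of_mem ((ihA hA z).2 h)) (orI1 _ _)
      · exact entails_cut (entails_of_mem ((ihB hB z).2 h)) (orI2 _ _)
  | prod A B ihA ihB =>
    intro hE z
    have hA : A ∈ Φ := mem_of_closure hcl (Closure.prodL (Closure.base hE))
    have hB : B ∈ Φ := mem_of_closure hcl (Closure.prodR (Closure.base hE))
    exact prod_case hfin hA hB hE (ihA hA) (ihB hB) z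
  | ldiv A B ihA ihB =>
    intro hE z
    have hA : A ∈ Φ := mem_of_closure hcl (Closure.ldivL (Closure.base hE))
    have hB : B ∈ Φ := mem_of_closure hcl (Closure.ldivR (Closure.base hE))
    exact ldiv_case hfin hA hB hE (ihA hA) (ihB hB) z
  | rdiv B A ihB ihA =>
    intro hE z
    have hA : A ∈ Φ := mem_of_closure hcl (Closure.rdivR (Closure.base hE))
    have hB : B ∈ Φ := mem_of_closure hcl (Closure.rdivL (Closure.base hE))
    exact rdiv_case hfin hA hB hE (ihA hA) (ihB hB) z
  | ildiv A B ihA ihB =>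
    intro hE z
    have hA : A ∈ Φ := mem_of_closure hcl (Closure.ildivL (Closure.base hE))
    have hB : B ∈ Φ := mem_of_closure hcl (Closure.ildivR (Closure.base hE))
    exact ildiv_case hfin hcl hA hB hE (ihA hA) (ihB hB) z
  | irdiv B A ihB ihA =>
    intro hE z
    have hA : A ∈ Φ := mem_of_closure hcl (Closure.irdivR (Closure.base hE))
    have hB : B ∈ Φ := mem_of_closure hcl (Closure.irdivL (Closure.base hE))
    exact irdiv_case hfin hcl hA hB hE (ihA hA) (ihB hB) z

end Cases
end TL

/-- Truth Lemma: for a finite closed set Φ, every E ∈ Φ and every state z of the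
canonical model M_Φ, E ∈ z_in iff z ⊨ E in M_Φ. -/
theorem truth_lemma (Φ : Set Fm) (hfin : Φ.Finite) (hcl : ClosedSet Φ)
    (E : Fm) (hE : E ∈ Φ) (z : CanState Φ) :
    E ∈ z.1.1 ↔ sat (canModel Φ) E z :=
  TL.truth_aux hfin hcl E hE z
end

section
/- (Soundness) Every sequent A ⊢ B provable in IDFNL is valid in every Došen frame. -/
lemma Rleft_cons {S : Type*} {R : S → S → S → Prop} {x : S} {xs : List S} (h : xs ≠ [])
    {s t : S} : Rleft R (x :: xs) s t ↔ ∃ z, R x s z ∧ Rleft R xs z t := by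
  cases xs with
  | nil => exact absurd rfl h
  | cons y ys => exact Iff.rfl

lemma Rright_cons {S : Type*} {R : S → S → S → Prop} {x : S} {xs : List S} (h : xs ≠ [])
    {s t : S} : Rright R s (x :: xs) t ↔ ∃ z, R s x z ∧ Rright R z xs t := by
  cases xs with
  | nil => exact absurd rfl h
  | cons y ys => exact Iff.rfl

lemma rleft_chain {S : Type*} (M : DosenModel S) {A B : Fm}
    (h : valid M A (B.ldiv A)) :
    ∀ (xs : List S) (s t : S), sat M A s → Rleft M.R xs s t →
      (∀ x ∈ xs, sat M B x) → sat M A t := by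
  intro xs
  induction xs with
  | nil => intro s t _ hR _; exact hR.elim
  | cons x xs ih =>
    intro s t hs hR hB
    cases xs with
    | nil => exact h s hs x t hR (hB x List.mem_cons_self)
    | cons y ys =>
      obtain ⟨z, hz1, hz2⟩ := hR
      exact ih z t (h s hs x z hz1 (hB x List.mem_cons_self)) hz2
        (fun w hw => hB w (List.mem_cons_of_mem _ hw))

lemma rright_chain {S : Type*} (M : DosenModel S) {A B : Fm}
    (h : valid M A (A.rdiv B)) :
    ∀ (xs : List S) (s t : S), sat M A s → Rright M.R s xs t →
      (∀ x ∈ xs, sat M B x) → sat M A t := by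
  intro xs
  induction xs with
  | nil => intro s t _ hR _; exact hR.elim
  | cons x xs ih =>
    intro s t hs hR hB
    cases xs with
    | nil => exact h s hs x t hR (hB x List.mem_cons_self)
    | cons y ys =>
      obtain ⟨z, hz1, hz2⟩ := hR
      exact ih z t (h s hs x z hz1 (hB x List.mem_cons_self)) hz2
        (fun w hw => hB w (List.mem_cons_of_mem _ hw))

/-- Soundness: every sequent provable in IDFNL is valid in every Došen frame. -/
theorem soundness (A B : Fm) (h : Prov A B)
    (S : Type) [Nonempty S] (M : DosenModel S) : valid M A B := by
  induction h with
  | id A => exact fun s hs => hs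
  | top A => exact fun s _ => trivial
  | bot A => exact fun s hs => hs.elim
  | andE1 A B => exact fun s hs => hs.1
  | andE2 A B => exact fun s hs => hs.2
  | orI1 A B => exact fun s hs => Or.inl hs
  | orI2 A B => exact fun s hs => Or.inr hs
  | distrib A B C =>
    rintro s ⟨ha, hb | hc⟩
    · exact Or.inl ⟨ha, hb⟩
    · exact Or.inr ⟨ha, hc⟩
  | ildivAnd A B C =>
    rintro s ⟨h1, h2⟩ xs t hne hR hA
    exact ⟨h1 xs t hne hR hA, h2 xs t hne hR hA⟩
  | ildivUnfold A B =>
    intro s hs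
    refine ⟨fun t u hR hA => hs [t] u (by simp) hR (by simpa using hA),
      fun t u hR hA xs w hne hR2 hA2 => ?_⟩
    refine hs (t :: xs) w (by simp) ((Rleft_cons hne).mpr ⟨u, hR, hR2⟩) ?_
    intro x hx
    rcases List.mem_cons.mp hx with rfl | hx'
    · exact hA
    · exact hA2 _ hx'
  | ildivFold A B =>
    rintro s ⟨h1, h2⟩ xs t hne hR hA
    cases xs with
    | nil => exact absurd rfl hne
    | cons x xs =>
      cases xs with
      | nil => exact h1 x t hR (hA x List.mem_cons_self)
      | cons y ys =>
        obtain ⟨z, hz1, hz2⟩ := hR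
        exact h2 x z hz1 (hA x List.mem_cons_self) (y :: ys) t (by simp) hz2
          (fun w hw => hA w (List.mem_cons_of_mem _ hw))
  | irdivAnd A B C =>
    rintro s ⟨h1, h2⟩ xs t hne hR hA
    exact ⟨h1 xs t hne hR hA, h2 xs t hne hR hA⟩
  | irdivUnfold A B =>
    intro s hs
    refine ⟨fun t u hR hA => hs [t] u (by simp) hR (by simpa using hA),
      fun t u hR hA xs w hne hR2 hA2 => ?_⟩
    refine hs (t :: xs) w (by simp) ((Rright_cons hne).mpr ⟨u, hR, hR2⟩) ?_
    intro x hx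
    rcases List.mem_cons.mp hx with rfl | hx'
    · exact hA
    · exact hA2 _ hx'
  | irdivFold A B =>
    rintro s ⟨h1, h2⟩ xs t hne hR hA
    cases xs with
    | nil => exact absurd rfl hne
    | cons x xs =>
      cases xs with
      | nil => exact h2 x t hR (hA x List.mem_cons_self)
      | cons y ys =>
        obtain ⟨z, hz1, hz2⟩ := hR
        exact h1 x z hz1 (hA x List.mem_cons_self) (y :: ys) t (by simp) hz2
          (fun w hw => hA w (List.mem_cons_of_mem _ hw))
  | resL1 h ih => exact fun s hs t u hR hA => ih u ⟨t, s, hR, hA, hs⟩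
  | resL2 h ih =>
    rintro s ⟨t, u, hR, hA, hB⟩
    exact ih u hB t s hR hA
  | resR1 h ih => exact fun s hs t u hR hB => ih u ⟨s, t, hR, hs, hB⟩
  | resR2 h ih =>
    rintro s ⟨t, u, hR, hA, hB⟩
    exact ih t hA u s hR hB
  | andI h1 h2 ih1 ih2 => exact fun s hs => ⟨ih1 s hs, ih2 s hs⟩
  | orE h1 h2 ih1 ih2 =>
    rintro s (hs | hs)
    · exact ih1 s hs
    · exact ih2 s hs
  | cut h1 h2 ih1 ih2 => exact fun s hs => ih2 s (ih1 s hs)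
  | ildivMono h1 h2 ih1 ih2 =>
    exact fun s hs xs t hne hR hA =>
      ih2 t (hs xs t hne hR (fun x hx => ih1 x (hA x hx)))
  | irdivMono h1 h2 ih1 ih2 =>
    exact fun s hs xs t hne hR hA =>
      ih2 t (hs xs t hne hR (fun x hx => ih1 x (hA x hx)))
  | ildivInd h ih =>
    exact fun s hs xs t _ hR hB => rleft_chain M ih xs s t hs hR hB
  | irdivInd h ih =>
    exact fun s hs xs t _ hR hB => rright_chain M ih xs s t hs hR hB
end
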